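/- arXiv:2004.00751 — 6 statements merged into one kernel-verified Lean document; each statement's English description precedes it below -/
import Mathlib

section
/- Let D be an Arrow's single-peaked domain on a finite set A with |A| ≥ 2. Then D has at most two terminal elements. Moreover, if D is a maximal Arrow's single-peaked domain on A, then D has exactly two terminal elements. -/
/-- A list `l` represents a linear order on the finite set `A`:
it is duplicate-free and its members are exactly the elements of `A`,
listed from most to least preferred. -/
def IsLinOrd {α : Type*} (A : Finset α) (l : List α) : Prop :=
  l.Nodup ∧ ∀ a : α, a ∈ l ↔ a ∈ A

/-- The restriction of the order `l` to the subset `S`. -/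
def restrictList {α : Type*} [DecidableEq α] (l : List α) (S : Finset α) : List α :=
  l.filter (fun a => a ∈ S)

/-- The domain contraction of `D` on `S`: the set of restrictions to `S`
of the orders in `D` (as a set, so duplicates are automatically removed). -/
def contraction {α : Type*} [DecidableEq α] (D : Set (List α)) (S : Finset α) :
    Set (List α) :=
  (fun l => restrictList l S) '' D

/-- `D` contains a Condorcet triple: elements `a, b, c` and orders
`v₁, v₂, v₃ ∈ D` restricting on `{a,b,c}` to `a≻b≻c`, `b≻c≻a`, `c≻a≻b`. -/
def CondorcetTriple {α : Type*} [DecidableEq α] (D : Set (List α)) : Prop :=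
  ∃ a b c : α, a ≠ b ∧ a ≠ c ∧ b ≠ c ∧
    ∃ v₁ ∈ D, ∃ v₂ ∈ D, ∃ v₃ ∈ D,
      restrictList v₁ {a, b, c} = [a, b, c] ∧
      restrictList v₂ {a, b, c} = [b, c, a] ∧
      restrictList v₃ {a, b, c} = [c, a, b]

/-- A Condorcet domain on `A`: a set of linear orders on `A` with no Condorcet triple. -/
def IsCondorcetDomain {α : Type*} [DecidableEq α] (A : Finset α) (D : Set (List α)) : Prop :=
  (∀ l ∈ D, IsLinOrd A l) ∧ ¬ CondorcetTriple D

/-- A maximal Condorcet domain on `A`: no strict superset is a Condorcet domain on `A`. -/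
def IsMaxCondorcetDomain {α : Type*} [DecidableEq α] (A : Finset α) (D : Set (List α)) : Prop :=
  IsCondorcetDomain A D ∧ ∀ D' : Set (List α), IsCondorcetDomain A D' → D ⊆ D' → D' = D

/-- `x` is a never-bottom element of the triple `T` for `D`:
no order of `D` ranks `x` below both other elements of `T`. -/
def NeverBottom {α : Type*} [DecidableEq α] (D : Set (List α)) (T : Finset α) (x : α) : Prop :=
  x ∈ T ∧ ∀ l ∈ D, (restrictList l T).getLast? ≠ some x

/-- An Arrow's single-peaked domain on `A`: a Condorcet domain such that every
3-element subset of `A` has a never-bottom element. -/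
def IsArrowSP {α : Type*} [DecidableEq α] (A : Finset α) (D : Set (List α)) : Prop :=
  IsCondorcetDomain A D ∧
    ∀ T : Finset α, T ⊆ A → T.card = 3 → ∃ x : α, NeverBottom D T x

/-- A maximal Arrow's single-peaked domain on `A`. -/
def IsMaxArrowSP {α : Type*} [DecidableEq α] (A : Finset α) (D : Set (List α)) : Prop :=
  IsMaxCondorcetDomain A D ∧ IsArrowSP A D

/-- `a` is a terminal element of `D`: some order of `D` ends with (least element) `a`. -/
def TerminalElt {α : Type*} (D : Set (List α)) (a : α) : Prop :=
  ∃ l ∈ D, l.getLast? = some a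

/-- `l` is an extremal order of `D`: `l ∈ D`, and the first and last elements of `l`
are the two terminal elements of `D`. -/
def IsExtremal {α : Type*} (D : Set (List α)) (l : List α) : Prop :=
  l ∈ D ∧ ∃ s t : α, s ≠ t ∧ l.head? = some s ∧ l.getLast? = some t ∧
    TerminalElt D s ∧ TerminalElt D t ∧ ∀ a : α, TerminalElt D a → a = s ∨ a = t

/-- The position of `a` in the order `l`, the first element being in position 1. -/
def posIn {α : Type*} [DecidableEq α] (l : List α) (a : α) : ℕ :=
  l.idxOf a + 1

lemma filter_pair_swap {α : Type*} (p : α → Bool) (s t : α) (h : p s = false ∨ p t = false) :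
    List.filter p [t, s] = List.filter p [s, t] := by
  rcases h with h | h <;> simp [List.filter, h]

lemma restrict_concat_mem {α : Type*} [DecidableEq α] (l : List α) (a : α) (T : Finset α)
    (h : a ∈ T) : restrictList (l ++ [a]) T = restrictList l T ++ [a] := by
  simp [restrictList, List.filter_append, h]

lemma restrict_getLast {α : Type*} [DecidableEq α] {l : List α} {a : α} (T : Finset α)
    (hl : l.getLast? = some a) (ha : a ∈ T) :
    (restrictList l T).getLast? = some a := by
  obtain ⟨l', rfl⟩ := List.getLast?_eq_some_iff.mp hl
  rw [restrict_concat_mem _ _ _ ha, List.getLast?_concat]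

lemma no_three {α : Type*} [DecidableEq α] {A : Finset α} {D : Set (List α)}
    (hD : IsArrowSP A D) {a b c : α} (hab : a ≠ b) (hac : a ≠ c) (hbc : b ≠ c)
    (ha : TerminalElt D a) (hb : TerminalElt D b) (hc : TerminalElt D c) : False := by
  have hmemA : ∀ x, TerminalElt D x → x ∈ A := by
    rintro x ⟨l, hl, hlast⟩
    obtain ⟨l', rfl⟩ := List.getLast?_eq_some_iff.mp hlast
    exact ((hD.1.1 _ hl).2 x).mp (by simp)
  obtain ⟨x, hxT, hx⟩ := hD.2 {a, b, c}
    (by intro y hy; simp only [Finset.mem_insert, Finset.mem_singleton] at hy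
        rcases hy with rfl | rfl | rfl
        exacts [hmemA _ ha, hmemA _ hb, hmemA _ hc])
    (by rw [Finset.card_eq_three]; exact ⟨a, b, c, hab, hac, hbc, rfl⟩)
  simp only [Finset.mem_insert, Finset.mem_singleton] at hxT
  rcases hxT with rfl | rfl | rfl
  · obtain ⟨l, hl, hlast⟩ := ha
    exact hx l hl (restrict_getLast _ hlast (by simp))
  · obtain ⟨l, hl, hlast⟩ := hb
    exact hx l hl (restrict_getLast _ hlast (by simp))
  · obtain ⟨l, hl, hlast⟩ := hc
    exact hx l hl (restrict_getLast _ hlast (by simp))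

lemma exists_two_terminals {α : Type*} [DecidableEq α] {A : Finset α} {D : Set (List α)}
    (hA : 2 ≤ A.card) (hmax : IsMaxCondorcetDomain A D) (hD : IsArrowSP A D) :
    ∃ s t : α, s ≠ t ∧ TerminalElt D s ∧ TerminalElt D t := by
  have hAne : A.Nonempty := Finset.card_pos.mp (by omega)
  -- D is nonempty
  have hDne : D.Nonempty := by
    by_contra h
    have hDe : D = ∅ := Set.not_nonempty_iff_eq_empty.mp h
    have hlin : IsLinOrd A A.toList := ⟨A.nodup_toList, fun a => Finset.mem_toList⟩
    have hCD : IsCondorcetDomain A (insert A.toList D) := by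
      constructor
      · intro l hl
        rcases Set.mem_insert_iff.mp hl with rfl | hl
        · exact hlin
        · exact hmax.1.1 l hl
      · rintro ⟨a, b, c, hab, hac, hbc, v₁, hv₁, v₂, hv₂, v₃, hv₃, r₁, r₂, r₃⟩
        rw [hDe] at hv₁ hv₂
        rcases Set.mem_insert_iff.mp hv₁ with rfl | hv₁
        · rcases Set.mem_insert_iff.mp hv₂ with h2 | hv₂
          · rw [h2] at r₂; rw [r₁] at r₂
            simp at r₂
            exact hab r₂.1
          · exact absurd hv₂ (Set.notMem_empty _)
        · exact absurd hv₁ (Set.notMem_empty _)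
    have := hmax.2 _ hCD (Set.subset_insert _ _)
    rw [hDe] at this
    have : A.toList ∈ (∅ : Set (List α)) := this ▸ Set.mem_insert _ _
    exact absurd this (Set.notMem_empty _)
  obtain ⟨l, hl⟩ := hDne
  have hlin := hD.1.1 l hl
  have hlne : l ≠ [] := by
    obtain ⟨a, haA⟩ := hAne
    exact List.ne_nil_of_mem ((hlin.2 a).mpr haA)
  have hlen : l.length = A.card := by
    rw [← List.toFinset_card_of_nodup hlin.1]
    congr 1
    ext x
    simp [hlin.2 x]
  set t := l.getLast hlne with htdef
  have hlast : l.getLast? = some t := List.getLast?_eq_getLast hlne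
  have ht : TerminalElt D t := ⟨l, hl, hlast⟩
  by_contra hno
  push_neg at hno
  have hone : ∀ x, TerminalElt D x → x = t := by
    intro x hx
    by_contra hxt
    exact (hno x t hxt hx) ht
  -- every order of D ends with t
  have hall : ∀ w ∈ D, w.getLast? = some t := by
    intro w hw
    have hwne : w ≠ [] := by
      obtain ⟨a, haA⟩ := hAne
      exact List.ne_nil_of_mem (((hD.1.1 w hw).2 a).mpr haA)
    have hwl := List.getLast?_eq_getLast hwne
    rw [hwl, hone _ ⟨w, hw, hwl⟩]
  -- decompose l = l₂ ++ [s, t]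
  obtain ⟨l₁, hl1⟩ := List.getLast?_eq_some_iff.mp hlast
  have hl₁ne : l₁ ≠ [] := by
    intro h
    rw [h] at hl1
    rw [hl1] at hlen
    simp at hlen
    omega
  obtain ⟨l₂, hl2⟩ := List.getLast?_eq_some_iff.mp (List.getLast?_eq_getLast hl₁ne)
  set s := l₁.getLast hl₁ne with hsdef
  have l_eq : l = l₂ ++ [s, t] := by rw [hl1, hl2]; simp
  set m := l₂ ++ [t, s] with hm
  have hperm : m.Perm l := by
    rw [l_eq, hm]
    exact List.Perm.append_left l₂ (List.Perm.swap s t [])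
  have hst : s ≠ t := by
    have hnd := hlin.1
    rw [l_eq] at hnd
    simp [List.nodup_append] at hnd
    tauto
  have hm_lin : IsLinOrd A m :=
    ⟨hperm.nodup_iff.mpr hlin.1, fun a => (hperm.mem_iff).trans (hlin.2 a)⟩
  have hm_last : m.getLast? = some s := by
    rw [show m = (l₂ ++ [t]) ++ [s] by rw [hm]; simp]
    exact List.getLast?_concat
  have hm_not : m ∉ D := by
    intro h
    have := hall m h
    rw [hm_last] at this
    exact hst (Option.some.inj this)
  have hCD : IsCondorcetDomain A (insert m D) := by
    constructor
    · intro w hw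
      rcases Set.mem_insert_iff.mp hw with rfl | hw
      · exact hm_lin
      · exact hD.1.1 w hw
    · rintro ⟨a, b, c, hab, hac, hbc, v₁, hv₁, v₂, hv₂, v₃, hv₃, r₁, r₂, r₃⟩
      set T : Finset α := {a, b, c} with hT
      by_cases hstT : s ∈ T ∧ t ∈ T
      · have key : ∀ v ∈ insert m D, ∀ x : α,
            (restrictList v T).getLast? = some x → x = s ∨ x = t := by
          intro v hv x hx
          rcases Set.mem_insert_iff.mp hv with rfl | hv
          · rw [restrict_getLast T hm_last hstT.1] at hx
            exact Or.inl (Option.some.inj hx).symm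
          · rw [restrict_getLast T (hall v hv) hstT.2] at hx
            exact Or.inr (Option.some.inj hx).symm
        have hc' := key v₁ hv₁ c (by rw [r₁]; rfl)
        have ha' := key v₂ hv₂ a (by rw [r₂]; rfl)
        have hb' := key v₃ hv₃ b (by rw [r₃]; rfl)
        rcases ha' with h0 | h0 <;> rcases hb' with h1 | h1 <;>
          rcases hc' with h2 | h2 <;>
          first
            | exact hab (h0.trans h1.symm)
            | exact hac (h0.trans h2.symm)
            | exact hbc (h1.trans h2.symm)
      · have hrest : restrictList m T = restrictList l T := by
          rw [hm, l_eq]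
          simp only [restrictList, List.filter_append]
          congr 1
          apply filter_pair_swap
          rcases not_and_or.mp hstT with h | h
          · exact Or.inl (by simp [h])
          · exact Or.inr (by simp [h])
        have hrep : ∀ i ∈ insert m D, ∃ w ∈ D, restrictList w T = restrictList i T := by
          intro i hi
          rcases Set.mem_insert_iff.mp hi with rfl | hi
          · exact ⟨l, hl, hrest.symm⟩
          · exact ⟨i, hi, rfl⟩
        obtain ⟨w₁, hw₁, e₁⟩ := hrep v₁ hv₁
        obtain ⟨w₂, hw₂, e₂⟩ := hrep v₂ hv₂
        obtain ⟨w₃, hw₃, e₃⟩ := hrep v₃ hv₃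
        exact hD.1.2 ⟨a, b, c, hab, hac, hbc, w₁, hw₁, w₂, hw₂, w₃, hw₃,
          e₁.trans r₁, e₂.trans r₂, e₃.trans r₃⟩
  have heq := hmax.2 _ hCD (Set.subset_insert _ _)
  exact hm_not (heq ▸ Set.mem_insert _ _)

/-- An Arrow's single-peaked domain on a set `A` with `|A| ≥ 2` has at most two
terminal elements; if moreover it is maximal, it has exactly two. -/
theorem stmt_0 {α : Type*} [DecidableEq α] (A : Finset α) (hA : 2 ≤ A.card)
    (D : Set (List α)) (hD : IsArrowSP A D) :
    (∃ s t : α, ∀ a : α, TerminalElt D a → a = s ∨ a = t) ∧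
    (IsMaxArrowSP A D →
      ∃ s t : α, s ≠ t ∧ TerminalElt D s ∧ TerminalElt D t ∧
        ∀ a : α, TerminalElt D a → a = s ∨ a = t) := by
  have hAne : A.Nonempty := Finset.card_pos.mp (by omega)
  constructor
  · by_cases h : ∃ s, TerminalElt D s
    · obtain ⟨s, hs⟩ := h
      by_cases h2 : ∃ t, TerminalElt D t ∧ t ≠ s
      · obtain ⟨t, ht, hts⟩ := h2
        refine ⟨s, t, fun a ha => ?_⟩
        by_contra hcon
        push_neg at hcon
        exact no_three hD (Ne.symm hts) (Ne.symm hcon.1) (Ne.symm hcon.2) hs ht ha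
      · push_neg at h2
        exact ⟨s, s, fun a ha => Or.inl (h2 a ha)⟩
    · push_neg at h
      obtain ⟨x, _⟩ := hAne
      exact ⟨x, x, fun a ha => absurd ha (h a)⟩
  · intro hmax
    obtain ⟨s, t, hst, hs, ht⟩ := exists_two_terminals hA hmax.1 hD
    refine ⟨s, t, hst, hs, ht, fun a ha => ?_⟩
    by_contra hcon
    push_neg at hcon
    exact no_three hD hst (Ne.symm hcon.1) (Ne.symm hcon.2) hs ht ha
end

section
/- There exist a set A of size 6, two linear orders P and Q on A, and two maximal Arrow's single-peaked domains D₁ and D₂ on A with D₁ ≠ D₂ such that P and Q are the two extremal orders of both D₁ and D₂, and D₁ is not isomorphic to D₂. (For instance A = {a,b,c,d,s,f}, P = (s,a,b,c,d,f), Q = (f,a,b,c,d,s).) -/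
section StmtAux

def L1 : List (List (Fin 6)) := [[0, 1, 2, 3, 4, 5],
  [0, 1, 2, 3, 5, 4],
  [0, 1, 2, 4, 3, 5],
  [0, 1, 2, 5, 3, 4],
  [0, 1, 4, 2, 3, 5],
  [0, 1, 5, 2, 3, 4],
  [0, 4, 1, 2, 3, 5],
  [0, 5, 1, 2, 3, 4],
  [1, 0, 2, 3, 4, 5],
  [1, 0, 2, 3, 5, 4],
  [1, 0, 2, 4, 3, 5],
  [1, 0, 2, 5, 3, 4],
  [1, 0, 4, 2, 3, 5],
  [1, 0, 5, 2, 3, 4],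
  [1, 2, 0, 3, 4, 5],
  [1, 2, 0, 3, 5, 4],
  [1, 2, 0, 4, 3, 5],
  [1, 2, 0, 5, 3, 4],
  [1, 2, 3, 0, 4, 5],
  [1, 2, 3, 0, 5, 4],
  [2, 1, 0, 3, 4, 5],
  [2, 1, 0, 3, 5, 4],
  [2, 1, 0, 4, 3, 5],
  [2, 1, 0, 5, 3, 4],
  [2, 1, 3, 0, 4, 5],
  [2, 1, 3, 0, 5, 4],
  [2, 3, 1, 0, 4, 5],
  [2, 3, 1, 0, 5, 4],
  [3, 2, 1, 0, 4, 5],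
  [3, 2, 1, 0, 5, 4],
  [4, 0, 1, 2, 3, 5],
  [5, 0, 1, 2, 3, 4]]

def L2 : List (List (Fin 6)) := [[0, 1, 2, 3, 4, 5],
  [0, 1, 2, 3, 5, 4],
  [0, 1, 2, 4, 3, 5],
  [0, 1, 2, 5, 3, 4],
  [0, 1, 4, 2, 3, 5],
  [0, 1, 5, 2, 3, 4],
  [0, 4, 1, 2, 3, 5],
  [0, 5, 1, 2, 3, 4],
  [1, 0, 2, 3, 4, 5],
  [1, 0, 2, 3, 5, 4],
  [1, 0, 2, 4, 3, 5],
  [1, 0, 2, 5, 3, 4],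
  [1, 0, 4, 2, 3, 5],
  [1, 0, 5, 2, 3, 4],
  [1, 2, 0, 3, 4, 5],
  [1, 2, 0, 3, 5, 4],
  [1, 2, 0, 4, 3, 5],
  [1, 2, 0, 5, 3, 4],
  [1, 2, 3, 0, 4, 5],
  [1, 2, 3, 0, 5, 4],
  [1, 3, 2, 0, 4, 5],
  [1, 3, 2, 0, 5, 4],
  [2, 1, 0, 3, 4, 5],
  [2, 1, 0, 3, 5, 4],
  [2, 1, 0, 4, 3, 5],
  [2, 1, 0, 5, 3, 4],
  [2, 1, 3, 0, 4, 5],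
  [2, 1, 3, 0, 5, 4],
  [3, 1, 2, 0, 4, 5],
  [3, 1, 2, 0, 5, 4],
  [4, 0, 1, 2, 3, 5],
  [5, 0, 1, 2, 3, 4]]

def E1 : List (Fin 6 × Fin 6 × Fin 6 × (List (Fin 6)) × (List (Fin 6))) := [
  (1, 2, 0, [1, 2, 0, 3, 4, 5], [0, 1, 2, 3, 4, 5]),
  (1, 0, 2, [1, 0, 2, 3, 4, 5], [2, 1, 0, 3, 4, 5]),
  (2, 3, 1, [2, 3, 1, 0, 4, 5], [0, 1, 2, 3, 4, 5]),
  (2, 1, 3, [2, 1, 0, 3, 4, 5], [3, 2, 1, 0, 4, 5]),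
  (0, 4, 1, [0, 4, 1, 2, 3, 5], [1, 0, 2, 3, 4, 5]),
  (0, 1, 4, [0, 1, 2, 3, 4, 5], [4, 0, 1, 2, 3, 5]),
  (0, 5, 1, [0, 5, 1, 2, 3, 4], [1, 0, 2, 3, 4, 5]),
  (0, 1, 5, [0, 1, 2, 3, 4, 5], [5, 0, 1, 2, 3, 4]),
  (1, 5, 4, [0, 1, 2, 3, 5, 4], [0, 4, 1, 2, 3, 5]),
  (1, 4, 5, [0, 1, 2, 3, 4, 5], [0, 5, 1, 2, 3, 4]),
  (2, 4, 5, [0, 1, 2, 3, 4, 5], [0, 1, 5, 2, 3, 4]),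
  (3, 4, 5, [0, 1, 2, 3, 4, 5], [0, 1, 2, 5, 3, 4]),
  (2, 5, 4, [0, 1, 2, 3, 5, 4], [0, 1, 4, 2, 3, 5]),
  (3, 5, 4, [0, 1, 2, 3, 5, 4], [0, 1, 2, 4, 3, 5])]

def E2 : List (Fin 6 × Fin 6 × Fin 6 × (List (Fin 6)) × (List (Fin 6))) := [
  (1, 2, 0, [1, 2, 0, 3, 4, 5], [0, 1, 2, 3, 4, 5]),
  (1, 0, 2, [1, 0, 2, 3, 4, 5], [2, 1, 0, 3, 4, 5]),
  (1, 3, 2, [1, 3, 2, 0, 4, 5], [2, 1, 0, 3, 4, 5]),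
  (1, 2, 3, [0, 1, 2, 3, 4, 5], [3, 1, 2, 0, 4, 5]),
  (1, 3, 0, [1, 2, 3, 0, 4, 5], [0, 1, 2, 3, 4, 5]),
  (1, 0, 3, [1, 0, 2, 3, 4, 5], [3, 1, 2, 0, 4, 5]),
  (2, 0, 3, [1, 2, 0, 3, 4, 5], [1, 3, 2, 0, 4, 5]),
  (2, 3, 0, [1, 2, 3, 0, 4, 5], [0, 1, 2, 3, 4, 5]),
  (0, 4, 1, [0, 4, 1, 2, 3, 5], [1, 0, 2, 3, 4, 5]),
  (0, 1, 4, [0, 1, 2, 3, 4, 5], [4, 0, 1, 2, 3, 5]),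
  (0, 5, 1, [0, 5, 1, 2, 3, 4], [1, 0, 2, 3, 4, 5]),
  (0, 1, 5, [0, 1, 2, 3, 4, 5], [5, 0, 1, 2, 3, 4]),
  (1, 5, 4, [0, 1, 2, 3, 5, 4], [0, 4, 1, 2, 3, 5]),
  (1, 4, 5, [0, 1, 2, 3, 4, 5], [0, 5, 1, 2, 3, 4]),
  (2, 4, 5, [0, 1, 2, 3, 4, 5], [0, 1, 5, 2, 3, 4]),
  (3, 4, 5, [0, 1, 2, 3, 4, 5], [0, 1, 2, 5, 3, 4]),
  (2, 5, 4, [0, 1, 2, 3, 5, 4], [0, 1, 4, 2, 3, 5]),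
  (3, 5, 4, [0, 1, 2, 3, 5, 4], [0, 1, 2, 4, 3, 5])]


def canon6 : List (Fin 6) := [0,1,2,3,4,5]

abbrev WEntry6 := Fin 6 × Fin 6 × Fin 6 × (List (Fin 6)) × (List (Fin 6))

lemma aux_linord {L : List (List (Fin 6))} (h : ∀ l ∈ L, l.Nodup ∧ ∀ a : Fin 6, a ∈ l) :
    ∀ l ∈ ({l | l ∈ L} : Set (List (Fin 6))), IsLinOrd Finset.univ l :=
  fun l hl => ⟨(h l hl).1, fun a => ⟨fun _ => Finset.mem_univ a, fun _ => (h l hl).2 a⟩⟩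

lemma aux_noCT {L : List (List (Fin 6))}
    (hsp : ∀ T : Finset (Fin 6), T.card = 3 →
      ∃ x ∈ T, ∀ l ∈ L, (restrictList l T).getLast? ≠ some x) :
    ¬ CondorcetTriple ({l | l ∈ L} : Set (List (Fin 6))) := by
  rintro ⟨a, b, c, hab, hac, hbc, v1, h1, v2, h2, v3, h3, r1, r2, r3⟩
  have hcard : ({a, b, c} : Finset (Fin 6)).card = 3 := by
    rw [Finset.card_insert_of_notMem (by simp [hab, hac]),
      Finset.card_insert_of_notMem (by simp [hbc]), Finset.card_singleton]
  obtain ⟨x, hx, hnb⟩ := hsp {a, b, c} hcard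
  have e1 := hnb v1 h1
  have e2 := hnb v2 h2
  have e3 := hnb v3 h3
  rw [r1] at e1; rw [r2] at e2; rw [r3] at e3
  simp only [Finset.mem_insert, Finset.mem_singleton] at hx
  rcases hx with rfl | rfl | rfl
  · exact e2 rfl
  · exact e3 rfl
  · exact e1 rfl

lemma aux_mem_perms (l : List (Fin 6)) (hlin : IsLinOrd Finset.univ l) :
    l ∈ canon6.permutations' := by
  refine List.mem_permutations'.2 ?_
  refine (List.perm_ext_iff_of_nodup hlin.1 (by decide)).2 ?_
  intro a
  exact ⟨fun _ => (by decide : ∀ a : Fin 6, a ∈ canon6) a,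
         fun _ => (hlin.2 a).mpr (Finset.mem_univ a)⟩

lemma aux_max {L : List (List (Fin 6))} {E : List WEntry6}
    (hlin : ∀ l ∈ L, l.Nodup ∧ ∀ a : Fin 6, a ∈ l)
    (hsp : ∀ T : Finset (Fin 6), T.card = 3 →
      ∃ x ∈ T, ∀ l ∈ L, (restrictList l T).getLast? ≠ some x)
    (hE : ∀ e ∈ E, (e.1 ≠ e.2.1 ∧ e.1 ≠ e.2.2.1 ∧ e.2.1 ≠ e.2.2.1) ∧
      e.2.2.2.1 ∈ L ∧ e.2.2.2.2 ∈ L ∧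
      restrictList e.2.2.2.1 {e.1, e.2.1, e.2.2.1} = [e.1, e.2.1, e.2.2.1] ∧
      restrictList e.2.2.2.2 {e.1, e.2.1, e.2.2.1} = [e.2.2.1, e.1, e.2.1])
    (hcov : ∀ l ∈ canon6.permutations', l ∈ L ∨ ∃ e ∈ E,
      restrictList l {e.1, e.2.1, e.2.2.1} = [e.2.1, e.2.2.1, e.1]) :
    IsMaxArrowSP Finset.univ ({l | l ∈ L} : Set (List (Fin 6))) := by
  have hCD : IsCondorcetDomain Finset.univ ({l | l ∈ L} : Set (List (Fin 6))) :=
    ⟨aux_linord hlin, aux_noCT hsp⟩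
  refine ⟨⟨hCD, ?_⟩, hCD, ?_⟩
  · intro D' hD' hsub
    refine Set.Subset.antisymm ?_ hsub
    intro l hl
    have hlp := aux_mem_perms l (hD'.1 l hl)
    rcases hcov l hlp with h | ⟨e, he, hr⟩
    · exact h
    · exfalso
      obtain ⟨⟨hab, hac, hbc⟩, m1, m3, r1, r3⟩ := hE e he
      exact hD'.2 ⟨e.1, e.2.1, e.2.2.1, hab, hac, hbc,
        e.2.2.2.1, hsub m1, l, hl, e.2.2.2.2, hsub m3, r1, hr, r3⟩
  · intro T _ hT
    obtain ⟨x, hx, hnb⟩ := hsp T hT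
    exact ⟨x, hx, fun l hl => hnb l hl⟩

lemma aux_ext {L : List (List (Fin 6))}
    (hP : ([4,0,1,2,3,5] : List (Fin 6)) ∈ L) (hQ : ([5,0,1,2,3,4] : List (Fin 6)) ∈ L)
    (hterm : ∀ l ∈ L, l.getLast? = some (4:Fin 6) ∨ l.getLast? = some (5:Fin 6))
    (hhead : ∀ l ∈ L, (l.head? = some (4:Fin 6) ∨ l.head? = some (5:Fin 6)) →
      l = [4,0,1,2,3,5] ∨ l = [5,0,1,2,3,4]) :
    IsExtremal ({l | l ∈ L} : Set (List (Fin 6))) [4,0,1,2,3,5] ∧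
    IsExtremal ({l | l ∈ L} : Set (List (Fin 6))) [5,0,1,2,3,4] ∧
    ∀ l, IsExtremal ({l | l ∈ L} : Set (List (Fin 6))) l →
      l = [4,0,1,2,3,5] ∨ l = [5,0,1,2,3,4] := by
  have t4 : TerminalElt ({l | l ∈ L} : Set (List (Fin 6))) (4:Fin 6) := ⟨_, hQ, rfl⟩
  have t5 : TerminalElt ({l | l ∈ L} : Set (List (Fin 6))) (5:Fin 6) := ⟨_, hP, rfl⟩
  have hcls : ∀ a : Fin 6, TerminalElt ({l | l ∈ L} : Set (List (Fin 6))) a →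
      a = 4 ∨ a = 5 := by
    rintro a ⟨l, hl, hlast⟩
    rcases hterm l hl with h | h
    · rw [hlast] at h; exact Or.inl (Option.some.inj h)
    · rw [hlast] at h; exact Or.inr (Option.some.inj h)
  refine ⟨⟨hP, 4, 5, by decide, rfl, rfl, t4, t5, hcls⟩,
    ⟨hQ, 5, 4, by decide, rfl, rfl, t5, t4, fun a h => (hcls a h).symm⟩, ?_⟩
  rintro l ⟨hl, s, t, hst, hh, hlst, hs, ht, hall⟩
  rcases hcls s hs with rfl | rfl
  · exact hhead l hl (Or.inl hh)
  · exact hhead l hl (Or.inr hh)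

end StmtAux

set_option maxRecDepth 100000 in
set_option maxHeartbeats 4000000 in
/-- There exist, on a set of size 6, two distinct non-isomorphic maximal Arrow's
single-peaked domains sharing the same pair of extremal orders. -/
theorem stmt_3 :
    ∃ (P Q : List (Fin 6)) (D₁ D₂ : Set (List (Fin 6))),
      D₁ ≠ D₂ ∧ P ≠ Q ∧
      IsMaxArrowSP Finset.univ D₁ ∧ IsMaxArrowSP Finset.univ D₂ ∧
      IsExtremal D₁ P ∧ IsExtremal D₁ Q ∧
      (∀ l : List (Fin 6), IsExtremal D₁ l → l = P ∨ l = Q) ∧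
      IsExtremal D₂ P ∧ IsExtremal D₂ Q ∧
      (∀ l : List (Fin 6), IsExtremal D₂ l → l = P ∨ l = Q) ∧
      ¬ ∃ φ : Equiv.Perm (Fin 6), (fun l => l.map φ) '' D₁ = D₂ := by
  have hni : ∀ p ∈ canon6.permutations', ∃ l ∈ L1,
      (l.map (fun i : Fin 6 => p.getD i.val 0)) ∉ L2 := by decide
  obtain ⟨e1P, e1Q, e1U⟩ := aux_ext (L := L1) (by decide) (by decide) (by decide) (by decide)
  obtain ⟨e2P, e2Q, e2U⟩ := aux_ext (L := L2) (by decide) (by decide) (by decide) (by decide)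
  refine ⟨[4,0,1,2,3,5], [5,0,1,2,3,4], {l | l ∈ L1}, {l | l ∈ L2}, ?_, by decide,
    aux_max (L := L1) (E := E1) (by decide) (by decide) (by decide) (by decide),
    aux_max (L := L2) (E := E2) (by decide) (by decide) (by decide) (by decide),
    e1P, e1Q, e1U, e2P, e2Q, e2U, ?_⟩
  · intro h
    have h1 : ([2,3,1,0,4,5] : List (Fin 6)) ∈ ({l | l ∈ L1} : Set (List (Fin 6))) :=
      show _ ∈ L1 by decide
    rw [h] at h1
    exact (by decide : ([2,3,1,0,4,5] : List (Fin 6)) ∉ L2) h1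
  · rintro ⟨φ, himg⟩
    have hpperm : canon6.map φ ∈ canon6.permutations' := by
      refine aux_mem_perms _ ⟨List.Nodup.map φ.injective (by decide),
        fun a => ⟨fun _ => Finset.mem_univ a, fun _ => ?_⟩⟩
      exact List.mem_map.2 ⟨φ.symm a, (by decide : ∀ x : Fin 6, x ∈ canon6) _,
        φ.apply_symm_apply a⟩
    obtain ⟨l, hlL, hnot⟩ := hni (canon6.map φ) hpperm
    have heq : l.map (fun i : Fin 6 => (canon6.map φ).getD i.val 0) = l.map φ :=
      List.map_congr_left (fun a _ => by fin_cases a <;> rfl)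
    have hm : l.map φ ∈ ({l | l ∈ L2} : Set (List (Fin 6))) := by
      rw [← himg]; exact ⟨l, hlL, rfl⟩
    rw [heq] at hnot
    exact hnot hm
end

section
/- Let D be a maximal Arrow's single-peaked domain on a set A of size m with terminal elements a₁ and a₂. For i ∈ {1,2}, let Dᵢ be the set of orders in D whose last element is aᵢ. Then the domain contraction of Dᵢ on A∖{aᵢ} is a maximal Arrow's single-peaked domain on A∖{aᵢ}. Furthermore, letting D̂₁ be the set of orders in D with a₁ in position m and a₂ in position m−1, and D̂₂ the set of orders in D with a₂ in position m and a₁ in position m−1, the permutation of A that swaps a₁ and a₂ and fixes every other element maps D̂₁ onto D̂₂. -/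
section AuxLemmas
variable {α : Type*} [DecidableEq α]

lemma mem_restrict {l : List α} {S : Finset α} {x : α} :
    x ∈ restrictList l S ↔ x ∈ l ∧ x ∈ S := by
  simp [restrictList, List.mem_filter]

lemma restrict_restrict (l : List α) {S T : Finset α} (h : ∀ x ∈ T, x ∈ S) :
    restrictList (restrictList l S) T = restrictList l T := by
  simp only [restrictList, List.filter_filter]
  apply List.filter_congr
  intro x _
  by_cases hx : x ∈ T <;> simp [hx, h x]

lemma restrict_append_mem (l : List α) {T : Finset α} {a : α} (ha : a ∈ T) :
    restrictList (l ++ [a]) T = restrictList l T ++ [a] := by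
  simp [restrictList, List.filter_append, ha]

lemma restrict_append_not_mem (l : List α) {T : Finset α} {a : α} (ha : a ∉ T) :
    restrictList (l ++ [a]) T = restrictList l T := by
  simp [restrictList, List.filter_append, ha]

lemma getLast?_restrict {l : List α} {T : Finset α} {a : α}
    (h : l.getLast? = some a) (ha : a ∈ T) :
    (restrictList l T).getLast? = some a := by
  obtain ⟨l', rfl⟩ := List.getLast?_eq_some_iff.mp h
  rw [restrict_append_mem _ ha, List.getLast?_concat]


lemma tripleset (a b c : α) : ({b, c, a} : Finset α) = {a, b, c} := by
  ext x; simp; tauto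

lemma noTripleBottoms {A : Finset α} {D : Set (List α)} (hsp : IsArrowSP A D)
    {T : Finset α} (hTA : T ⊆ A) (hT3 : T.card = 3)
    (h : ∀ x ∈ T, ∃ l ∈ D, (restrictList l T).getLast? = some x) : False := by
  obtain ⟨x, hxT, hx⟩ := hsp.2 T hTA hT3
  obtain ⟨l, hl, hlast⟩ := h x hxT
  exact hx l hl hlast

lemma addOrder {A : Finset α} {D : Set (List α)} (hsp : IsArrowSP A D)
    (hmax : IsMaxCondorcetDomain A D) {w : List α} (hw : IsLinOrd A w)
    (h : ∀ a b c : α, a ≠ b → a ≠ c → b ≠ c → ∀ v₂ ∈ D, ∀ v₃ ∈ D,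
      restrictList w {a, b, c} = [a, b, c] → restrictList v₂ {a, b, c} = [b, c, a] →
      restrictList v₃ {a, b, c} = [c, a, b] → False) : w ∈ D := by
  have hCD : IsCondorcetDomain A (D ∪ {w}) := by
    constructor
    · rintro l (hl | rfl)
      · exact hsp.1.1 l hl
      · exact hw
    · rintro ⟨a, b, c, hab, hac, hbc, v₁, hv₁, v₂, hv₂, v₃, hv₃, h₁, h₂, h₃⟩
      simp only [Set.union_singleton, Set.mem_insert_iff] at hv₁ hv₂ hv₃
      rcases hv₁ with rfl | hv₁
      · rcases hv₂ with rfl | hv₂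
        · exact hab (by simpa using congrArg List.head? (h₁.symm.trans h₂))
        rcases hv₃ with rfl | hv₃
        · exact hac (by simpa using congrArg List.head? (h₁.symm.trans h₃))
        exact h a b c hab hac hbc v₂ hv₂ v₃ hv₃ h₁ h₂ h₃
      rcases hv₂ with rfl | hv₂
      · rcases hv₃ with rfl | hv₃
        · exact hbc (by simpa using congrArg List.head? (h₂.symm.trans h₃))
        exact h b c a hbc hab.symm hac.symm v₃ hv₃ v₁ hv₁
          (by rw [tripleset]; exact h₂) (by rw [tripleset]; exact h₃)
          (by rw [tripleset]; exact h₁)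
      rcases hv₃ with rfl | hv₃
      · exact h c a b hac.symm hbc.symm hab v₁ hv₁ v₂ hv₂
          (by rw [tripleset, tripleset]; exact h₃) (by rw [tripleset, tripleset]; exact h₁)
          (by rw [tripleset, tripleset]; exact h₂)
      exact hsp.1.2 ⟨a, b, c, hab, hac, hbc, v₁, hv₁, v₂, hv₂, v₃, hv₃, h₁, h₂, h₃⟩
  have := hmax.2 _ hCD Set.subset_union_left
  rw [← this]; exact Set.mem_union_right _ rfl

lemma card3 {x y z : α} (hxy : x ≠ y) (hxz : x ≠ z) (hyz : y ≠ z) :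
    ({x, y, z} : Finset α).card = 3 := by
  rw [Finset.card_insert_of_notMem (by simp [hxy, hxz]),
    Finset.card_insert_of_notMem (by simp [hyz]), Finset.card_singleton]

lemma mem_A_of_restrict {A : Finset α} {v : List α} (hv : IsLinOrd A v) {T : Finset α}
    {x : α} (hx : x ∈ restrictList v T) : x ∈ A :=
  (hv.2 x).mp (mem_restrict.mp hx).1

def moveEnd (v : List α) (a : α) : List α := v.filter (fun x => x ≠ a) ++ [a]

lemma moveEnd_getLast? (v : List α) (a : α) : (moveEnd v a).getLast? = some a :=
  List.getLast?_concat

lemma moveEnd_linOrd {A : Finset α} {v : List α} (hv : IsLinOrd A v) {a : α} (ha : a ∈ A) :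
    IsLinOrd A (moveEnd v a) := by
  constructor
  · apply List.Nodup.append (hv.1.filter _) (List.nodup_singleton a)
    intro x hx hx'
    simp only [List.mem_filter, decide_eq_true_eq] at hx
    simp only [List.mem_singleton] at hx'
    exact hx.2 hx'
  · intro x
    simp only [moveEnd, List.mem_append, List.mem_filter, List.mem_singleton,
      decide_eq_true_eq, hv.2 x]
    constructor
    · rintro (⟨h, -⟩ | rfl) <;> [exact h; exact ha]
    · intro hx
      by_cases hxa : x = a
      · exact Or.inr hxa
      · exact Or.inl ⟨hx, hxa⟩

lemma restrict_moveEnd_not_mem {v : List α} {a : α} {T : Finset α} (ha : a ∉ T) :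
    restrictList (moveEnd v a) T = restrictList v T := by
  rw [moveEnd, restrict_append_not_mem _ ha]
  simp only [restrictList, List.filter_filter]
  apply List.filter_congr
  intro x _
  by_cases hx : x ∈ T
  · have : x ≠ a := fun h => ha (h ▸ hx)
    simp [hx, this]
  · simp [hx]

lemma moveEnd_mem {A : Finset α} {D : Set (List α)} (hsp : IsArrowSP A D)
    (hmax : IsMaxCondorcetDomain A D) {a : α} (ht : TerminalElt D a)
    {v : List α} (hv : v ∈ D) : moveEnd v a ∈ D := by
  have hvlin := hsp.1.1 v hv
  have haA : a ∈ A := by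
    obtain ⟨l, hl, hlast⟩ := ht
    exact ((hsp.1.1 l hl).2 a).mp (List.mem_of_getLast? hlast)
  apply addOrder hsp hmax (moveEnd_linOrd hvlin haA)
  intro x y z hxy hxz hyz v₂ hv₂ v₃ hv₃ h₁ h₂ h₃
  by_cases haT : a ∈ ({x, y, z} : Finset α)
  · have hz : z = a := by
      have h' := getLast?_restrict (moveEnd_getLast? v a) haT
      rw [h₁] at h'
      simpa using h'
    have hxA : x ∈ A := mem_A_of_restrict (hsp.1.1 v₂ hv₂) (by rw [h₂]; simp)
    have hyA : y ∈ A := mem_A_of_restrict (hsp.1.1 v₂ hv₂) (by rw [h₂]; simp)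
    have hzA : z ∈ A := mem_A_of_restrict (hsp.1.1 v₂ hv₂) (by rw [h₂]; simp)
    have hTA : ({x, y, z} : Finset α) ⊆ A := by
      intro t ht'
      simp only [Finset.mem_insert, Finset.mem_singleton] at ht'
      rcases ht' with rfl | rfl | rfl <;> assumption
    apply noTripleBottoms hsp hTA (card3 hxy hxz hyz)
    intro t ht'
    simp only [Finset.mem_insert, Finset.mem_singleton] at ht'
    rcases ht' with rfl | rfl | rfl
    · exact ⟨v₂, hv₂, by simp [h₂]⟩
    · exact ⟨v₃, hv₃, by simp [h₃]⟩
    · obtain ⟨l, hl, hlast⟩ := ht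
      exact ⟨l, hl, by rw [hz] at haT ⊢; exact getLast?_restrict hlast haT⟩
  · have he : restrictList (moveEnd v a) {x, y, z} = restrictList v {x, y, z} :=
      restrict_moveEnd_not_mem haT
    exact hsp.1.2 ⟨x, y, z, hxy, hxz, hyz, v, hv, v₂, hv₂, v₃, hv₃, he ▸ h₁, h₂, h₃⟩


lemma triple_contra {A : Finset α} {D : Set (List α)} (hsp : IsArrowSP A D)
    {a x y z : α} (ht : TerminalElt D a) (hz : z = a)
    (hxy : x ≠ y) (hxz : x ≠ z) (hyz : y ≠ z)
    {v₂ v₃ : List α} (hv₂ : v₂ ∈ D) (hv₃ : v₃ ∈ D)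
    (h₂ : restrictList v₂ {x, y, z} = [y, z, x])
    (h₃ : restrictList v₃ {x, y, z} = [z, x, y]) : False := by
  subst hz
  have hxA : x ∈ A := mem_A_of_restrict (hsp.1.1 v₂ hv₂) (by rw [h₂]; simp)
  have hyA : y ∈ A := mem_A_of_restrict (hsp.1.1 v₂ hv₂) (by rw [h₂]; simp)
  have hzA : z ∈ A := mem_A_of_restrict (hsp.1.1 v₂ hv₂) (by rw [h₂]; simp)
  have hTA : ({x, y, z} : Finset α) ⊆ A := by
    intro t ht'
    simp only [Finset.mem_insert, Finset.mem_singleton] at ht'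
    rcases ht' with rfl | rfl | rfl <;> assumption
  apply noTripleBottoms hsp hTA (card3 hxy hxz hyz)
  intro t ht'
  simp only [Finset.mem_insert, Finset.mem_singleton] at ht'
  rcases ht' with rfl | rfl | rfl
  · exact ⟨v₂, hv₂, by simp [h₂]⟩
  · exact ⟨v₃, hv₃, by simp [h₃]⟩
  · obtain ⟨l, hl, hlast⟩ := ht
    exact ⟨l, hl, getLast?_restrict hlast (by simp)⟩

lemma restrict_linOrd {A : Finset α} {v : List α} (hv : IsLinOrd A v) {S : Finset α}
    (hS : S ⊆ A) : IsLinOrd S (restrictList v S) := by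
  refine ⟨hv.1.filter _, fun x => ?_⟩
  rw [mem_restrict]
  exact ⟨fun h => h.2, fun h => ⟨(hv.2 x).mpr (hS h), h⟩⟩

lemma contraction_max {A : Finset α} {D : Set (List α)} (hD : IsMaxArrowSP A D)
    {a : α} (ht : TerminalElt D a) :
    IsMaxArrowSP (A.erase a)
      (contraction {l ∈ D | l.getLast? = some a} (A.erase a)) := by
  obtain ⟨hmax, hsp⟩ := hD
  set C := contraction {l ∈ D | l.getLast? = some a} (A.erase a) with hC
  have haA : a ∈ A := by
    obtain ⟨l, hl, hlast⟩ := ht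
    exact ((hsp.1.1 l hl).2 a).mp (List.mem_of_getLast? hlast)
  have hsub : A.erase a ⊆ A := Finset.erase_subset a A
  -- unpack membership in C
  have hCmem : ∀ r ∈ C, ∃ v, v ∈ D ∧ v.getLast? = some a ∧
      r = restrictList v (A.erase a) := by
    rintro r ⟨v, ⟨hv, hvl⟩, rfl⟩
    exact ⟨v, hv, hvl, rfl⟩
  have hClin : ∀ r ∈ C, IsLinOrd (A.erase a) r := by
    intro r hr
    obtain ⟨v, hv, -, rfl⟩ := hCmem r hr
    exact restrict_linOrd (hsp.1.1 v hv) hsub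
  have hrr : ∀ (v : List α) (T : Finset α), T ⊆ A.erase a →
      restrictList (restrictList v (A.erase a)) T = restrictList v T := by
    intro v T hT
    exact restrict_restrict v (fun x hx => hT hx)
  -- C is a Condorcet domain
  have hCcd : IsCondorcetDomain (A.erase a) C := by
    refine ⟨hClin, ?_⟩
    rintro ⟨x, y, z, hxy, hxz, hyz, r₁, hr₁, r₂, hr₂, r₃, hr₃, h₁, h₂, h₃⟩
    obtain ⟨v₁, hv₁, -, rfl⟩ := hCmem r₁ hr₁
    obtain ⟨v₂, hv₂, -, rfl⟩ := hCmem r₂ hr₂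
    obtain ⟨v₃, hv₃, -, rfl⟩ := hCmem r₃ hr₃
    have hTsub : ({x, y, z} : Finset α) ⊆ A.erase a := by
      intro t ht'
      simp only [Finset.mem_insert, Finset.mem_singleton] at ht'
      have h2' := hClin _ hr₂
      rcases ht' with rfl | rfl | rfl
      · exact mem_A_of_restrict (hClin _ hr₂) (by rw [h₂]; simp)
      · exact mem_A_of_restrict (hClin _ hr₂) (by rw [h₂]; simp)
      · exact mem_A_of_restrict (hClin _ hr₂) (by rw [h₂]; simp)
    rw [hrr v₁ _ hTsub] at h₁
    rw [hrr v₂ _ hTsub] at h₂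
    rw [hrr v₃ _ hTsub] at h₃
    exact hsp.1.2 ⟨x, y, z, hxy, hxz, hyz, v₁, hv₁, v₂, hv₂, v₃, hv₃, h₁, h₂, h₃⟩
  -- C is Arrow single-peaked
  have hCsp : IsArrowSP (A.erase a) C := by
    refine ⟨hCcd, fun T hT hT3 => ?_⟩
    obtain ⟨x, hxT, hx⟩ := hsp.2 T (hT.trans hsub) hT3
    refine ⟨x, hxT, ?_⟩
    intro r hr
    obtain ⟨v, hv, -, rfl⟩ := hCmem r hr
    rw [hrr v T hT]
    exact hx v hv
  -- maximality
  refine ⟨⟨hCcd, ?_⟩, hCsp⟩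
  intro D' hD' hsubC
  refine Set.Subset.antisymm ?_ hsubC
  intro u hu
  have hulin : IsLinOrd (A.erase a) u := hD'.1 u hu
  have hanu : a ∉ u := fun h => (Finset.notMem_erase a A) ((hulin.2 a).mp h)
  have huAlin : IsLinOrd A (u ++ [a]) := by
    constructor
    · apply List.Nodup.append hulin.1 (List.nodup_singleton a)
      intro t htu hta
      simp only [List.mem_singleton] at hta
      exact hanu (hta ▸ htu)
    · intro t
      simp only [List.mem_append, List.mem_singleton, hulin.2 t, Finset.mem_erase]
      constructor
      · rintro (⟨-, h⟩ | rfl) <;> [exact h; exact haA]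
      · intro htA
        by_cases hta : t = a
        · exact Or.inr hta
        · exact Or.inl ⟨hta, htA⟩
  have huD : u ++ [a] ∈ D := by
    apply addOrder hsp hmax huAlin
    intro x y z hxy hxz hyz v₂ hv₂ v₃ hv₃ h₁ h₂ h₃
    by_cases haT : a ∈ ({x, y, z} : Finset α)
    · have hz : z = a := by
        have h' := getLast?_restrict (List.getLast?_concat (l := u) (a := a)) haT
        rw [h₁] at h'
        simpa using h'
      exact triple_contra hsp ht hz hxy hxz hyz hv₂ hv₃ h₂ h₃
    · have hTsub : ({x, y, z} : Finset α) ⊆ A.erase a := by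
        intro t ht'
        rw [Finset.mem_erase]
        constructor
        · exact fun h => haT (h ▸ ht')
        · simp only [Finset.mem_insert, Finset.mem_singleton] at ht'
          rcases ht' with rfl | rfl | rfl
          · exact mem_A_of_restrict (hsp.1.1 v₂ hv₂) (by rw [h₂]; simp)
          · exact mem_A_of_restrict (hsp.1.1 v₂ hv₂) (by rw [h₂]; simp)
          · exact mem_A_of_restrict (hsp.1.1 v₂ hv₂) (by rw [h₂]; simp)
      rw [restrict_append_not_mem u haT] at h₁
      have hv₂' := moveEnd_mem hsp hmax ht hv₂
      have hv₃' := moveEnd_mem hsp hmax ht hv₃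
      have hr₂ : restrictList (moveEnd v₂ a) (A.erase a) ∈ C :=
        ⟨moveEnd v₂ a, ⟨hv₂', moveEnd_getLast? v₂ a⟩, rfl⟩
      have hr₃ : restrictList (moveEnd v₃ a) (A.erase a) ∈ C :=
        ⟨moveEnd v₃ a, ⟨hv₃', moveEnd_getLast? v₃ a⟩, rfl⟩
      apply hD'.2
      refine ⟨x, y, z, hxy, hxz, hyz, u, hu,
        restrictList (moveEnd v₂ a) (A.erase a), hsubC hr₂,
        restrictList (moveEnd v₃ a) (A.erase a), hsubC hr₃, h₁, ?_, ?_⟩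
      · rw [hrr _ _ hTsub, restrict_moveEnd_not_mem haT]; exact h₂
      · rw [hrr _ _ hTsub, restrict_moveEnd_not_mem haT]; exact h₃
  refine ⟨u ++ [a], ⟨huD, List.getLast?_concat⟩, ?_⟩
  show restrictList (u ++ [a]) (A.erase a) = u
  rw [restrict_append_not_mem u (Finset.notMem_erase a A)]
  apply List.filter_eq_self.mpr
  intro t htu
  simpa using (hulin.2 t).mp htu


lemma linOrd_length {A : Finset α} {l : List α} (hv : IsLinOrd A l) :
    l.length = A.card := by
  have hft : l.toFinset = A := Finset.ext (fun x => by simp [hv.2 x])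
  rw [← hft, List.toFinset_card_of_nodup hv.1]

lemma split_last_two {l : List α} {m : ℕ} (hlen : l.length = m) (hnd : l.Nodup)
    {b₁ b₂ : α} (h1 : posIn l b₁ = m) (h2 : posIn l b₂ = m - 1) :
    l = l.take (m - 2) ++ [b₂, b₁] ∧ b₁ ∉ l.take (m - 2) ∧ b₂ ∉ l.take (m - 2) ∧
      (l.take (m - 2)).length = m - 2 ∧ 2 ≤ m := by
  simp only [posIn] at h1 h2
  have hb₁ : l.idxOf b₁ < l.length ∨ l.idxOf b₁ = l.length := by
    rcases lt_or_ge (l.idxOf b₁) l.length with h | h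
    · exact Or.inl h
    · exact Or.inr (le_antisymm (List.idxOf_le_length) h)
  have hb₂ : l.idxOf b₂ < l.length ∨ l.idxOf b₂ = l.length := by
    rcases lt_or_ge (l.idxOf b₂) l.length with h | h
    · exact Or.inl h
    · exact Or.inr (le_antisymm (List.idxOf_le_length) h)
  have hm2 : 2 ≤ m := by omega
  have hi1 : l.idxOf b₁ = m - 1 := by omega
  have hi2 : l.idxOf b₂ = m - 2 := by omega
  have hq1 : l[m - 1]? = some b₁ := by
    rw [← hi1]
    exact List.getElem?_idxOf (List.idxOf_lt_length_iff.mp (by omega))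
  have hq2 : l[m - 2]? = some b₂ := by
    rw [← hi2]
    exact List.getElem?_idxOf (List.idxOf_lt_length_iff.mp (by omega))
  rw [List.getElem?_eq_getElem (by omega : m - 1 < l.length)] at hq1
  rw [List.getElem?_eq_getElem (by omega : m - 2 < l.length)] at hq2
  have hg1 : l[m - 1]'(by omega) = b₁ := Option.some.inj hq1
  have hg2 : l[m - 2]'(by omega) = b₂ := Option.some.inj hq2
  have hdrop : l.drop (m - 2) = [b₂, b₁] := by
    rw [List.drop_eq_getElem_cons (by omega), hg2]
    have h21 : m - 2 + 1 = m - 1 := by omega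
    rw [h21, List.drop_eq_getElem_cons (by omega), hg1]
    have hm1 : m - 1 + 1 = m := by omega
    rw [hm1, List.drop_eq_nil_of_le (by omega)]
  have heq : l = l.take (m - 2) ++ [b₂, b₁] := by
    conv_lhs => rw [← List.take_append_drop (m - 2) l]
    rw [hdrop]
  have hnd' : (l.take (m - 2) ++ [b₂, b₁]).Nodup := heq ▸ hnd
  rw [List.nodup_append] at hnd'
  refine ⟨heq, fun h => ?_, fun h => ?_, ?_, hm2⟩
  · exact hnd'.2.2 _ h _ (by simp) rfl
  · exact hnd'.2.2 _ h _ (by simp) rfl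
  · rw [List.length_take, hlen]; omega

lemma swap_memD {A : Finset α} {D : Set (List α)} (hsp : IsArrowSP A D)
    (hmax : IsMaxCondorcetDomain A D) {b₁ b₂ : α} (hb : b₁ ≠ b₂)
    (ht : TerminalElt D b₂) {l : List α} (hl : l ∈ D) {m : ℕ} (hmA : A.card = m)
    (h1 : posIn l b₁ = m) (h2 : posIn l b₂ = m - 1) :
    l.map (Equiv.swap b₁ b₂) ∈ D ∧ posIn (l.map (Equiv.swap b₁ b₂)) b₂ = m ∧
      posIn (l.map (Equiv.swap b₁ b₂)) b₁ = m - 1 := by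
  have hllin := hsp.1.1 l hl
  have hlen : l.length = m := by rw [linOrd_length hllin, hmA]
  obtain ⟨heq, hn1, hn2, hlen0, hm2⟩ := split_last_two hlen hllin.1 h1 h2
  set l₀ := l.take (m - 2) with hl₀
  have hmap : l.map (Equiv.swap b₁ b₂) = l₀ ++ [b₁, b₂] := by
    conv_lhs => rw [heq]
    rw [List.map_append]
    congr 1
    · apply (List.map_congr_left ?_).trans (List.map_id l₀)
      intro t htl₀
      apply Equiv.swap_apply_of_ne_of_ne
      · exact fun h => hn1 (h ▸ htl₀)
      · exact fun h => hn2 (h ▸ htl₀)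
    · simp [Equiv.swap_apply_left, Equiv.swap_apply_right]
  set w := l₀ ++ [b₁, b₂] with hwdef
  have hperm : w.Perm l := by
    conv_rhs => rw [heq]
    exact List.Perm.append_left l₀ (List.Perm.swap b₂ b₁ [])
  have hwlin : IsLinOrd A w := by
    refine ⟨hperm.nodup_iff.mpr hllin.1, fun t => (hperm.mem_iff).trans (hllin.2 t)⟩
  have key : ∀ (T : Finset α), ¬(b₁ ∈ T ∧ b₂ ∈ T) →
      restrictList w T = restrictList l T := by
    intro T hT
    rw [hwdef]
    conv_rhs => rw [heq]
    simp only [restrictList, List.filter_append]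
    congr 1
    by_cases h1T : b₁ ∈ T <;> by_cases h2T : b₂ ∈ T <;>
      simp [h1T, h2T] <;> exact absurd ⟨h1T, h2T⟩ hT
  have hwD : w ∈ D := by
    apply addOrder hsp hmax hwlin
    intro x y z hxy hxz hyz v₂ hv₂ v₃ hv₃ h₁ h₂ h₃
    by_cases hbT : b₁ ∈ ({x, y, z} : Finset α) ∧ b₂ ∈ ({x, y, z} : Finset α)
    · -- both endpoints in the triple
      have hres : restrictList w {x, y, z} = restrictList l₀ {x, y, z} ++ [b₁, b₂] := by
        rw [hwdef]
        simp only [restrictList, List.filter_append]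
        congr 1
        apply List.filter_eq_self.mpr
        intro t htl
        simp only [List.mem_cons, List.not_mem_nil, or_false] at htl
        rcases htl with rfl | rfl
        · simpa using hbT.1
        · simpa using hbT.2
      rw [hres] at h₁
      have hflen : (restrictList l₀ {x, y, z}).length = 1 := by
        have := congrArg List.length h₁
        simp at this
        omega
      obtain ⟨e, he⟩ := List.length_eq_one_iff.mp hflen
      rw [he] at h₁
      simp only [List.cons_append, List.nil_append, List.cons.injEq, and_true] at h₁
      obtain ⟨hex, hyb, hzb⟩ := h₁
      exact triple_contra hsp ht hzb.symm hxy hxz hyz hv₂ hv₃ h₂ h₃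
    · rw [key _ hbT] at h₁
      exact hsp.1.2 ⟨x, y, z, hxy, hxz, hyz, l, hl, v₂, hv₂, v₃, hv₃, h₁, h₂, h₃⟩
  refine ⟨hmap ▸ hwD, ?_, ?_⟩
  · rw [hmap]
    simp only [posIn]
    rw [List.idxOf_append_of_notMem hn2, List.idxOf_cons_ne _ hb,
      List.idxOf_cons_self]
    omega
  · rw [hmap]
    simp only [posIn]
    rw [List.idxOf_append_of_notMem hn1, List.idxOf_cons_self]
    omega



end AuxLemmas

/-- Contraction lemma: for a maximal Arrow's single-peaked domain `D` with terminal
elements `a₁, a₂`, the contraction on `A ∖ {aᵢ}` of the orders ending in `aᵢ` is a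
maximal Arrow's single-peaked domain; and the transposition `(a₁ a₂)` maps the orders
ending `…, a₂, a₁` onto the orders ending `…, a₁, a₂`. -/
theorem stmt_4 {α : Type*} [DecidableEq α] (A : Finset α) (m : ℕ) (hm : A.card = m)
    (D : Set (List α)) (hD : IsMaxArrowSP A D) (a₁ a₂ : α) (h12 : a₁ ≠ a₂)
    (ht1 : TerminalElt D a₁) (ht2 : TerminalElt D a₂)
    (hall : ∀ a : α, TerminalElt D a → a = a₁ ∨ a = a₂) :
    (∀ i ∈ ({a₁, a₂} : Set α),
      IsMaxArrowSP (A.erase i)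
        (contraction {l ∈ D | l.getLast? = some i} (A.erase i))) ∧
    (fun l : List α => l.map (Equiv.swap a₁ a₂)) ''
        {l ∈ D | posIn l a₁ = m ∧ posIn l a₂ = m - 1} =
      {l ∈ D | posIn l a₂ = m ∧ posIn l a₁ = m - 1} := by
  constructor
  · intro i hi
    simp only [Set.mem_insert_iff, Set.mem_singleton_iff] at hi
    rcases hi with rfl | rfl
    · exact contraction_max hD ht1
    · exact contraction_max hD ht2
  · apply Set.Subset.antisymm
    · rintro l' ⟨l, ⟨hlD, hp1, hp2⟩, rfl⟩
      obtain ⟨hw, hq2, hq1⟩ := swap_memD hD.2 hD.1 h12 ht2 hlD hm hp1 hp2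
      exact ⟨hw, hq2, hq1⟩
    · rintro l ⟨hlD, hp2, hp1⟩
      obtain ⟨hw, hq1, hq2⟩ := swap_memD hD.2 hD.1 h12.symm ht1 hlD hm hp2 hp1
      refine ⟨l.map (Equiv.swap a₂ a₁), ⟨hw, hq1, hq2⟩, ?_⟩
      show List.map (Equiv.swap a₁ a₂) (List.map (Equiv.swap a₂ a₁) l) = l
      rw [List.map_map]
      apply (List.map_congr_left ?_).trans (List.map_id l)
      intro t _
      show (Equiv.swap a₁ a₂) ((Equiv.swap a₂ a₁) t) = t
      rw [Equiv.swap_comm a₂ a₁, Equiv.swap_apply_self]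
end

section
/- Let D be a maximal Arrow's single-peaked domain on a set of size m ≥ 3 with terminal elements a₁ and a₂. Then for each i ∈ {1,2} and each j with 2 ≤ j ≤ m, exactly 2^(j−2) orders in D have aᵢ in position j, and exactly one order in D has aᵢ in position 1. -/
set_option linter.unusedSectionVars false


section helpers
variable {α : Type*} [DecidableEq α] {A : Finset α} {l w : List α} {a : α} {T : Finset α}

lemma restrict_concat_mem_s5 (h : a ∈ T) :
    restrictList (w ++ [a]) T = restrictList w T ++ [a] := by
  simp [restrictList, List.filter_append, h]

lemma restrict_concat_not_mem (h : a ∉ T) :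
    restrictList (w ++ [a]) T = restrictList w T := by
  simp [restrictList, List.filter_append, h]

lemma restrict_erase_not_mem (h : a ∉ T) (l : List α) :
    restrictList (l.erase a) T = restrictList l T := by
  induction l with
  | nil => rfl
  | cons b t ih =>
    by_cases hb : b = a
    · subst hb
      rw [List.erase_cons_head]
      simp [restrictList, List.filter_cons, h]
    · rw [List.erase_cons_tail (by simp [hb])]
      simp only [restrictList, List.filter_cons] at ih ⊢
      by_cases hbT : b ∈ T <;> simp [hbT, ih]

lemma getLast?_restrict_concat (h : a ∈ T) (w : List α) :
    (restrictList (w ++ [a]) T).getLast? = some a := by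
  rw [restrict_concat_mem_s5 h, List.getLast?_concat]

lemma eq_concat_of_getLast? (h : l.getLast? = some a) : l = l.dropLast ++ [a] := by
  have hne : l ≠ [] := by rintro rfl; simp at h
  have := List.dropLast_append_getLast hne
  rw [List.getLast?_eq_getLast hne] at h
  have ha : l.getLast hne = a := by injection h
  rw [← ha]
  exact this.symm

lemma mem_of_getLast?' (h : l.getLast? = some a) : a ∈ l := by
  rw [eq_concat_of_getLast? h]; simp

lemma IsLinOrd.length_eq (h : IsLinOrd A l) : l.length = A.card := by
  have : l.toFinset = A := by ext x; simp [h.2 x]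
  rw [← this, List.toFinset_card_of_nodup h.1]

lemma finite_of_linOrd {D : Set (List α)} (h : ∀ l ∈ D, IsLinOrd A l) : D.Finite := by
  apply Set.Finite.subset (A.toList.permutations.toFinset : Finset (List α)).finite_toSet
  intro l hl
  simp only [Finset.coe_sort_coe, List.coe_toFinset, Set.mem_setOf_eq, List.mem_permutations]
  exact List.perm_of_nodup_nodup_toFinset_eq (h l hl).1 A.nodup_toList
    (by ext x; simp [(h l hl).2 x])

omit [DecidableEq α] in
lemma concat_injective (a : α) : Function.Injective (fun w : List α => w ++ [a]) := by
  intro x y h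
  simpa using congrArg List.dropLast h

end helpers

section main
variable {α : Type*} [DecidableEq α] {A : Finset α} {D : Set (List α)} {a₁ a₂ : α}

lemma terminal_mem_A (hlin : ∀ l ∈ D, IsLinOrd A l) (ht : TerminalElt D a₂) : a₂ ∈ A := by
  obtain ⟨l, hl, hend⟩ := ht
  exact ((hlin l hl).2 a₂).mp (mem_of_getLast?' hend)

lemma terminal_restrict_bottom {T : Finset α} (ht : TerminalElt D a₂) (haT : a₂ ∈ T) :
    ∃ l ∈ D, (restrictList l T).getLast? = some a₂ := by
  obtain ⟨l, hl, hend⟩ := ht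
  refine ⟨l, hl, ?_⟩
  rw [eq_concat_of_getLast? hend]
  exact getLast?_restrict_concat haT _

lemma caseT (hsp : IsArrowSP A D) (ht2 : TerminalElt D a₂)
    {x y z : α} (hxy : x ≠ y) (hxz : x ≠ z) (hyz : y ≠ z)
    (hx : x ∈ A) (hy : y ∈ A) (hz : z ∈ A)
    (ha₂ : a₂ ∈ ({x, y, z} : Finset α))
    {v₁ v₂ v₃ : List α}
    (h1m : v₁ ∈ D ∨ (restrictList v₁ {x, y, z}).getLast? = some a₂)
    (h2m : v₂ ∈ D ∨ (restrictList v₂ {x, y, z}).getLast? = some a₂)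
    (h3m : v₃ ∈ D ∨ (restrictList v₃ {x, y, z}).getLast? = some a₂)
    (e1 : restrictList v₁ {x, y, z} = [x, y, z])
    (e2 : restrictList v₂ {x, y, z} = [y, z, x])
    (e3 : restrictList v₃ {x, y, z} = [z, x, y]) : False := by
  have hsub : ({x, y, z} : Finset α) ⊆ A := by
    intro u hu
    rcases Finset.mem_insert.mp hu with rfl | hu
    · exact hx
    rcases Finset.mem_insert.mp hu with rfl | hu
    · exact hy
    · rwa [Finset.mem_singleton.mp hu]
  have hcard : ({x, y, z} : Finset α).card = 3 :=
    Finset.card_eq_three.mpr ⟨x, y, z, hxy, hxz, hyz, rfl⟩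
  obtain ⟨t, htT, hnb⟩ := hsp.2 _ hsub hcard
  obtain ⟨lt, hlt, hltend⟩ := terminal_restrict_bottom ht2 ha₂
  have hta₂ : t ≠ a₂ := by
    rintro rfl
    exact hnb lt hlt hltend
  rcases Finset.mem_insert.mp htT with rfl | htT
  · -- t = x : bottom of v₂'s restriction
    rcases h2m with h2 | h2
    · exact hnb v₂ h2 (by rw [e2]; simp)
    · rw [e2] at h2; simp at h2; exact hta₂ h2
  rcases Finset.mem_insert.mp htT with rfl | htT
  · rcases h3m with h3 | h3
    · exact hnb v₃ h3 (by rw [e3]; simp)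
    · rw [e3] at h3; simp at h3; exact hta₂ h3
  · rw [Finset.mem_singleton] at htT; subst htT
    rcases h1m with h1 | h1
    · exact hnb v₁ h1 (by rw [e1]; simp)
    · rw [e1] at h1; simp at h1; exact hta₂ h1

lemma mem_A_of_restrict_cons {v : List α} {T : Finset α} {x : α} {r : List α}
    (hlin : IsLinOrd A v) (he : restrictList v T = r) (hx : x ∈ r) : x ∈ A := by
  subst he
  exact (hlin.2 x).mp (List.mem_of_mem_filter hx)

lemma move_to_end (hD : IsMaxArrowSP A D) (ht2 : TerminalElt D a₂)
    {l : List α} (hl : l ∈ D) : l.erase a₂ ++ [a₂] ∈ D := by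
  obtain ⟨⟨⟨hlin, hnt⟩, hmax⟩, hsp⟩ := hD
  have ha₂A : a₂ ∈ A := terminal_mem_A hlin ht2
  set lm := l.erase a₂ ++ [a₂] with hlm
  have hllin := hlin l hl
  have hlinU : ∀ v ∈ D ∪ {lm}, IsLinOrd A v := by
    rintro v (hv | rfl)
    · exact hlin v hv
    constructor
    · have h1 : (l.erase a₂).Nodup := hllin.1.erase a₂
      have h2 : a₂ ∉ l.erase a₂ := fun h => ((hllin.1.mem_erase_iff).mp h).1 rfl
      simp [hlm, List.nodup_append, h1, h2]
      rintro a ha rfl; exact h2 ha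
    · intro u
      simp only [hlm, List.mem_append, List.mem_singleton, hllin.1.mem_erase_iff]
      constructor
      · rintro (⟨-, hu⟩ | rfl)
        · exact (hllin.2 u).mp hu
        · exact ha₂A
      · intro hu
        by_cases h : u = a₂
        · exact Or.inr h
        · exact Or.inl ⟨h, (hllin.2 u).mpr hu⟩
  have hcond : IsCondorcetDomain A (D ∪ {lm}) := by
    refine ⟨hlinU, ?_⟩
    rintro ⟨x, y, z, hxy, hxz, hyz, v₁, hv₁, v₂, hv₂, v₃, hv₃, e1, e2, e3⟩
    have hx : x ∈ A := mem_A_of_restrict_cons (hlinU v₁ hv₁) e1 (by simp)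
    have hy : y ∈ A := mem_A_of_restrict_cons (hlinU v₁ hv₁) e1 (by simp)
    have hz : z ∈ A := mem_A_of_restrict_cons (hlinU v₁ hv₁) e1 (by simp)
    by_cases hT : a₂ ∈ ({x, y, z} : Finset α)
    · refine caseT ⟨⟨hlin, hnt⟩, hsp.2⟩ ht2 hxy hxz hyz hx hy hz hT ?_ ?_ ?_ e1 e2 e3 <;>
      · first
        | (rcases hv₁ with h | rfl
           · exact Or.inl h
           · exact Or.inr (getLast?_restrict_concat hT _))
        | (rcases hv₂ with h | rfl
           · exact Or.inl h
           · exact Or.inr (getLast?_restrict_concat hT _))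
        | (rcases hv₃ with h | rfl
           · exact Or.inl h
           · exact Or.inr (getLast?_restrict_concat hT _))
    · have repl : ∀ v, v ∈ D ∪ {lm} → ∃ u ∈ D,
          restrictList u {x, y, z} = restrictList v {x, y, z} := by
        rintro v (hv | rfl)
        · exact ⟨v, hv, rfl⟩
        · exact ⟨l, hl, by
            rw [hlm, restrict_concat_not_mem hT, restrict_erase_not_mem hT]⟩
      obtain ⟨u₁, hu₁, r1⟩ := repl v₁ hv₁
      obtain ⟨u₂, hu₂, r2⟩ := repl v₂ hv₂
      obtain ⟨u₃, hu₃, r3⟩ := repl v₃ hv₃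
      exact hnt ⟨x, y, z, hxy, hxz, hyz, u₁, hu₁, u₂, hu₂, u₃, hu₃,
        r1.trans e1, r2.trans e2, r3.trans e3⟩
  have heq := hmax _ hcond Set.subset_union_left
  rw [← heq]
  exact Set.mem_union_right _ rfl

end main

section main2
variable {α : Type*} [DecidableEq α] {A : Finset α} {D : Set (List α)} {a : α}

lemma restrict_append (l₁ l₂ : List α) (T : Finset α) :
    restrictList (l₁ ++ l₂) T = restrictList l₁ T ++ restrictList l₂ T :=
  List.filter_append _ _

lemma no_three_terminals (hsp : IsArrowSP A D) {t₁ t₂ t₃ : α}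
    (h12 : t₁ ≠ t₂) (h13 : t₁ ≠ t₃) (h23 : t₂ ≠ t₃)
    (ht1 : TerminalElt D t₁) (ht2 : TerminalElt D t₂) (ht3 : TerminalElt D t₃) : False := by
  have hsub : ({t₁, t₂, t₃} : Finset α) ⊆ A := by
    intro u hu
    rcases Finset.mem_insert.mp hu with rfl | hu
    · exact terminal_mem_A hsp.1.1 ht1
    rcases Finset.mem_insert.mp hu with rfl | hu
    · exact terminal_mem_A hsp.1.1 ht2
    · rw [Finset.mem_singleton.mp hu]; exact terminal_mem_A hsp.1.1 ht3
  have hcard : ({t₁, t₂, t₃} : Finset α).card = 3 :=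
    Finset.card_eq_three.mpr ⟨t₁, t₂, t₃, h12, h13, h23, rfl⟩
  obtain ⟨t, htT, hnb⟩ := hsp.2 _ hsub hcard
  have b1 := terminal_restrict_bottom (T := {t₁, t₂, t₃}) ht1 (by simp)
  have b2 := terminal_restrict_bottom (T := {t₁, t₂, t₃}) ht2 (by simp)
  have b3 := terminal_restrict_bottom (T := {t₁, t₂, t₃}) ht3 (by simp)
  rcases Finset.mem_insert.mp htT with rfl | htT
  · obtain ⟨l, hl, hb⟩ := b1; exact hnb l hl hb
  rcases Finset.mem_insert.mp htT with rfl | htT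
  · obtain ⟨l, hl, hb⟩ := b2; exact hnb l hl hb
  · have := Finset.mem_singleton.mp htT; subst this
    obtain ⟨l, hl, hb⟩ := b3; exact hnb l hl hb

lemma swap_last (hD : IsMaxArrowSP A D) (huniq : ∀ v ∈ D, v.getLast? = some a)
    {l : List α} (hl : l ∈ D) (hlen : 2 ≤ l.length) : False := by
  obtain ⟨⟨⟨hlin, hnt⟩, hmax⟩, hsp⟩ := hD
  have hllin := hlin l hl
  have hdec : l = l.dropLast ++ [a] := eq_concat_of_getLast? (huniq l hl)
  set w := l.dropLast with hw
  have hwne : w ≠ [] := by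
    intro h
    rw [hdec, h] at hlen
    simp at hlen
  set b := w.getLast hwne with hb
  have hdecw : w = w.dropLast ++ [b] := eq_concat_of_getLast? (List.getLast?_eq_getLast hwne)
  set l₀ := w.dropLast with hl₀
  have hldec : l = l₀ ++ [b, a] := by
    rw [hdec, hdecw]; simp
  set l' := l₀ ++ [a, b] with hl'
  have hperm : l'.Perm l := by
    rw [hldec, hl']
    exact List.Perm.append_left l₀ (List.Perm.swap b a [])
  have hba : b ≠ a := by
    intro h
    have := hllin.1
    rw [hldec, h] at this
    simp [List.nodup_append] at this
  have hlinU : ∀ v ∈ D ∪ {l'}, IsLinOrd A v := by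
    rintro v (hv | rfl)
    · exact hlin v hv
    exact ⟨hperm.nodup_iff.mpr hllin.1, fun u => (hperm.mem_iff).trans (hllin.2 u)⟩
  have hendD : ∀ v ∈ D, ∀ (T : Finset α), a ∈ T → (restrictList v T).getLast? = some a := by
    intro v hv T haT
    have hd : v = v.dropLast ++ [a] := eq_concat_of_getLast? (huniq v hv)
    rw [hd]
    exact getLast?_restrict_concat haT _
  have hcond : IsCondorcetDomain A (D ∪ {l'}) := by
    refine ⟨hlinU, ?_⟩
    rintro ⟨x, y, z, hxy, hxz, hyz, v₁, hv₁, v₂, hv₂, v₃, hv₃, e1, e2, e3⟩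
    by_cases hT : a ∈ ({x, y, z} : Finset α)
    · rcases hv₁ with h1 | h1 <;> rcases hv₂ with h2 | h2 <;> rcases hv₃ with h3 | h3
      · have hz : z = a := by have := hendD v₁ h1 _ hT; rw [e1] at this; simpa using this
        have hx : x = a := by have := hendD v₂ h2 _ hT; rw [e2] at this; simpa using this
        exact hxz (hx.trans hz.symm)
      · have hz : z = a := by have := hendD v₁ h1 _ hT; rw [e1] at this; simpa using this
        have hx : x = a := by have := hendD v₂ h2 _ hT; rw [e2] at this; simpa using this
        exact hxz (hx.trans hz.symm)
      · have hz : z = a := by have := hendD v₁ h1 _ hT; rw [e1] at this; simpa using this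
        have hy : y = a := by have := hendD v₃ h3 _ hT; rw [e3] at this; simpa using this
        exact hyz (hy.trans hz.symm)
      · -- v₂ = l', v₃ = l'
        rw [Set.mem_singleton_iff] at h2 h3
        rw [h2] at e2; rw [h3] at e3
        rw [e2] at e3
        simp at e3
        exact hyz e3.1
      · have hx : x = a := by have := hendD v₂ h2 _ hT; rw [e2] at this; simpa using this
        have hy : y = a := by have := hendD v₃ h3 _ hT; rw [e3] at this; simpa using this
        exact hxy (hx.trans hy.symm)
      · -- v₁ = l', v₃ = l'
        rw [Set.mem_singleton_iff] at h1 h3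
        rw [h1] at e1; rw [h3] at e3
        rw [e1] at e3
        simp at e3
        exact hxz e3.1
      · -- v₁ = l', v₂ = l'
        rw [Set.mem_singleton_iff] at h1 h2
        rw [h1] at e1; rw [h2] at e2
        rw [e1] at e2
        simp at e2
        exact hxy e2.1
      · rw [Set.mem_singleton_iff] at h1 h2
        rw [h1] at e1; rw [h2] at e2
        rw [e1] at e2
        simp at e2
        exact hxy e2.1
    · have hrepl : restrictList l' {x, y, z} = restrictList l {x, y, z} := by
        have ha : ¬(a = x ∨ a = y ∨ a = z) := by simpa using hT
        rw [hl', hldec, restrict_append, restrict_append]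
        congr 1
        by_cases hb' : b = x ∨ b = y ∨ b = z <;>
          simp [restrictList, List.filter_cons, Finset.mem_insert, Finset.mem_singleton, ha, hb']
      have repl : ∀ v, v ∈ D ∪ {l'} → ∃ u ∈ D,
          restrictList u {x, y, z} = restrictList v {x, y, z} := by
        rintro v (hv | rfl)
        · exact ⟨v, hv, rfl⟩
        · exact ⟨l, hl, hrepl.symm⟩
      obtain ⟨u₁, hu₁, r1⟩ := repl v₁ hv₁
      obtain ⟨u₂, hu₂, r2⟩ := repl v₂ hv₂
      obtain ⟨u₃, hu₃, r3⟩ := repl v₃ hv₃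
      exact hnt ⟨x, y, z, hxy, hxz, hyz, u₁, hu₁, u₂, hu₂, u₃, hu₃,
        r1.trans e1, r2.trans e2, r3.trans e3⟩
  have heq := hmax _ hcond Set.subset_union_left
  have hl'D : l' ∈ D := by rw [← heq]; exact Set.mem_union_right _ rfl
  have : l'.getLast? = some a := huniq l' hl'D
  rw [hl'] at this
  have : b = a := by
    have h2 : (l₀ ++ [a, b]).getLast? = some b := by
      have : l₀ ++ [a, b] = (l₀ ++ [a]) ++ [b] := by simp
      rw [this, List.getLast?_concat]
    rw [h2] at this
    injection this
  exact hba this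

lemma domain_nonempty (hD : IsMaxArrowSP A D) : D.Nonempty := by
  rw [Set.nonempty_iff_ne_empty]
  intro h
  have hcond : IsCondorcetDomain A {A.toList} := by
    constructor
    · rintro l rfl
      exact ⟨A.nodup_toList, fun u => Finset.mem_toList⟩
    · rintro ⟨x, y, z, hxy, hxz, hyz, v₁, hv₁, v₂, hv₂, v₃, hv₃, e1, e2, e3⟩
      rw [Set.mem_singleton_iff] at hv₁ hv₂
      rw [hv₁] at e1; rw [hv₂] at e2
      rw [e1] at e2
      simp at e2
      exact hxy e2.1
  have := hD.1.2 _ hcond (by rw [h]; exact Set.empty_subset _)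
  rw [h] at this
  have hmem : A.toList ∈ ({A.toList} : Set (List α)) := rfl
  rw [this] at hmem
  exact Set.notMem_empty _ hmem
  
lemma exists_two_terminals_s5 (hD : IsMaxArrowSP A D) (hA : 2 ≤ A.card) :
    ∃ t₁ t₂ : α, t₁ ≠ t₂ ∧ TerminalElt D t₁ ∧ TerminalElt D t₂ ∧
      ∀ u : α, TerminalElt D u → u = t₁ ∨ u = t₂ := by
  obtain ⟨l, hl⟩ := domain_nonempty hD
  have hlen : l.length = A.card := (hD.1.1.1 l hl).length_eq
  have hne : l ≠ [] := by
    intro h; rw [h] at hlen; simp at hlen; omega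
  set t₁ := l.getLast hne with ht₁
  have ht1 : TerminalElt D t₁ := ⟨l, hl, List.getLast?_eq_getLast hne⟩
  have hsecond : ∃ t₂, t₂ ≠ t₁ ∧ TerminalElt D t₂ := by
    by_contra h
    push_neg at h
    have huniq : ∀ v ∈ D, v.getLast? = some t₁ := by
      intro v hv
      have hvne : v ≠ [] := by
        intro hv0
        have := (hD.1.1.1 v hv).length_eq
        rw [hv0] at this; simp at this; omega
      have hvt : TerminalElt D (v.getLast hvne) := ⟨v, hv, List.getLast?_eq_getLast hvne⟩
      by_cases he : v.getLast hvne = t₁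
      · rw [List.getLast?_eq_getLast hvne, he]
      · exact absurd hvt (h _ he)
    exact absurd (swap_last hD huniq hl (by omega)) id
  obtain ⟨t₂, ht21, ht2⟩ := hsecond
  refine ⟨t₁, t₂, ht21.symm, ht1, ht2, ?_⟩
  intro u hu
  by_contra h
  push_neg at h
  exact no_three_terminals hD.2 ht21.symm h.1.symm h.2.symm ht1 ht2 hu

end main2

section child
variable {α : Type*} [DecidableEq α] {A : Finset α} {D : Set (List α)} {a₂ : α}

/-- The child domain: orders of `D` ending with `a₂`, with `a₂` removed. -/
def childDom (D : Set (List α)) (a₂ : α) : Set (List α) := {w : List α | w ++ [a₂] ∈ D}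

omit [DecidableEq α] in
lemma mem_childDom {w : List α} : w ∈ childDom D a₂ ↔ w ++ [a₂] ∈ D := Iff.rfl

lemma mem_of_restrict_eq {v r : List α} {T : Finset α} {u : α}
    (e : restrictList v T = r) (h : u ∈ r) : u ∈ v := by
  rw [← e] at h
  exact List.mem_of_mem_filter h

lemma child_isMaxArrowSP (hD : IsMaxArrowSP A D) (ht2 : TerminalElt D a₂) :
    IsMaxArrowSP (A.erase a₂) (childDom D a₂) := by
  obtain ⟨⟨⟨hlin, hnt⟩, hmax⟩, hsp⟩ := hD
  have ha₂A : a₂ ∈ A := terminal_mem_A hlin ht2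
  -- linear orders
  have hlinC : ∀ w ∈ childDom D a₂, IsLinOrd (A.erase a₂) w := by
    intro w hw
    have h := hlin _ hw
    have hnd := h.1
    rw [List.nodup_append] at hnd
    refine ⟨hnd.1, fun u => ?_⟩
    rw [Finset.mem_erase]
    constructor
    · intro hu
      exact ⟨fun he => hnd.2.2 u hu a₂ (by simp) he, (h.2 u).mp (by simp [hu])⟩
    · rintro ⟨hne, hu⟩
      rcases List.mem_append.mp ((h.2 u).mpr hu) with h' | h'
      · exact h'
      · simp at h'; exact absurd h' hne
  -- no condorcet triple
  have hntC : ¬ CondorcetTriple (childDom D a₂) := by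
    rintro ⟨x, y, z, hxy, hxz, hyz, v₁, hv₁, v₂, hv₂, v₃, hv₃, e1, e2, e3⟩
    have hndv := (hlin _ hv₁).1
    rw [List.nodup_append] at hndv
    have hxm : x ∈ v₁ := mem_of_restrict_eq e1 (by simp)
    have hym : y ∈ v₁ := mem_of_restrict_eq e1 (by simp)
    have hzm : z ∈ v₁ := mem_of_restrict_eq e1 (by simp)
    have hT : a₂ ∉ ({x, y, z} : Finset α) := by
      intro h
      have ha₂v : a₂ ∈ v₁ := by
        rcases Finset.mem_insert.mp h with rfl | h
        · exact hxm
        rcases Finset.mem_insert.mp h with rfl | h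
        · exact hym
        · rw [Finset.mem_singleton.mp h]; exact hzm
      exact hndv.2.2 a₂ ha₂v a₂ (by simp) rfl
    refine hnt ⟨x, y, z, hxy, hxz, hyz, v₁ ++ [a₂], hv₁, v₂ ++ [a₂], hv₂, v₃ ++ [a₂], hv₃,
      ?_, ?_, ?_⟩ <;> rw [restrict_concat_not_mem hT] <;> assumption
  -- Arrow SP
  have hspC : ∀ T : Finset α, T ⊆ A.erase a₂ → T.card = 3 →
      ∃ x : α, NeverBottom (childDom D a₂) T x := by
    intro T hT hc
    have ha₂T : a₂ ∉ T := fun h => (Finset.mem_erase.mp (hT h)).1 rfl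
    obtain ⟨x, hxT, hnb⟩ := hsp.2 T (hT.trans (Finset.erase_subset _ _)) hc
    refine ⟨x, hxT, fun w hw => ?_⟩
    rw [← restrict_concat_not_mem (w := w) ha₂T]
    exact hnb _ hw
  refine ⟨⟨⟨hlinC, hntC⟩, ?_⟩, ⟨hlinC, hntC⟩, hspC⟩
  -- maximality
  intro D'' hcond'' hsub
  refine Set.Subset.antisymm ?_ hsub
  intro w hw
  set w' := w ++ [a₂] with hw'
  have hwlin := hcond''.1 w hw
  have hw'lin : IsLinOrd A w' := by
    constructor
    · have h2 : a₂ ∉ w := fun h => (Finset.mem_erase.mp ((hwlin.2 a₂).mp h)).1 rfl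
      simp [hw', List.nodup_append, hwlin.1, h2]
      rintro a ha rfl; exact h2 ha
    · intro u
      rw [hw', List.mem_append]
      constructor
      · rintro (h | h)
        · exact (Finset.mem_erase.mp ((hwlin.2 u).mp h)).2
        · simp at h; rw [h]; exact ha₂A
      · intro hu
        by_cases he : u = a₂
        · simp [he]
        · exact Or.inl ((hwlin.2 u).mpr (Finset.mem_erase.mpr ⟨he, hu⟩))
  have hlinU : ∀ v ∈ D ∪ {w'}, IsLinOrd A v := by
    rintro v (hv | rfl)
    · exact hlin v hv
    · exact hw'lin
  have hcondE : IsCondorcetDomain A (D ∪ {w'}) := by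
    refine ⟨hlinU, ?_⟩
    rintro ⟨x, y, z, hxy, hxz, hyz, v₁, hv₁, v₂, hv₂, v₃, hv₃, e1, e2, e3⟩
    have hx : x ∈ A := ((hlinU v₁ hv₁).2 x).mp (mem_of_restrict_eq e1 (by simp))
    have hy : y ∈ A := ((hlinU v₁ hv₁).2 y).mp (mem_of_restrict_eq e1 (by simp))
    have hz : z ∈ A := ((hlinU v₁ hv₁).2 z).mp (mem_of_restrict_eq e1 (by simp))
    by_cases hT : a₂ ∈ ({x, y, z} : Finset α)
    · refine caseT ⟨⟨hlin, hnt⟩, hsp.2⟩ ht2 hxy hxz hyz hx hy hz hT ?_ ?_ ?_ e1 e2 e3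
      · rcases hv₁ with h | h
        · exact Or.inl h
        · rw [Set.mem_singleton_iff] at h; rw [h, hw']
          exact Or.inr (getLast?_restrict_concat hT _)
      · rcases hv₂ with h | h
        · exact Or.inl h
        · rw [Set.mem_singleton_iff] at h; rw [h, hw']
          exact Or.inr (getLast?_restrict_concat hT _)
      · rcases hv₃ with h | h
        · exact Or.inl h
        · rw [Set.mem_singleton_iff] at h; rw [h, hw']
          exact Or.inr (getLast?_restrict_concat hT _)
    · have repl : ∀ v, v ∈ D ∪ {w'} → ∃ u ∈ D'',
          restrictList u {x, y, z} = restrictList v {x, y, z} := by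
        rintro v (hv | rfl)
        · refine ⟨v.erase a₂, hsub ?_, restrict_erase_not_mem hT v⟩
          rw [mem_childDom]
          exact move_to_end ⟨⟨⟨hlin, hnt⟩, hmax⟩, hsp⟩ ht2 hv
        · exact ⟨w, hw, (restrict_concat_not_mem hT).symm⟩
      obtain ⟨u₁, hu₁, r1⟩ := repl v₁ hv₁
      obtain ⟨u₂, hu₂, r2⟩ := repl v₂ hv₂
      obtain ⟨u₃, hu₃, r3⟩ := repl v₃ hv₃
      exact hcond''.2 ⟨x, y, z, hxy, hxz, hyz, u₁, hu₁, u₂, hu₂, u₃, hu₃,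
        r1.trans e1, r2.trans e2, r3.trans e3⟩
  have heq := hmax _ hcondE Set.subset_union_left
  have : w' ∈ D := by rw [← heq]; exact Set.mem_union_right _ rfl
  exact this

lemma child_terminal (hD : IsMaxArrowSP A D) (ht2 : TerminalElt D a₂) {t : α}
    (ht : TerminalElt D t) (hta : t ≠ a₂) : TerminalElt (childDom D a₂) t := by
  have ha₂A : a₂ ∈ A := terminal_mem_A hD.1.1.1 ht2
  obtain ⟨l, hl, hend⟩ := ht
  obtain ⟨w, rfl⟩ : ∃ w, l = w ++ [t] := ⟨l.dropLast, eq_concat_of_getLast? hend⟩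
  have ha₂w : a₂ ∈ w := by
    have : a₂ ∈ w ++ [t] := ((hD.1.1.1 _ hl).2 a₂).mpr ha₂A
    rcases List.mem_append.mp this with h | h
    · exact h
    · simp at h; exact absurd h.symm hta
  have hmv := move_to_end hD ht2 hl
  rw [List.erase_append_left _ ha₂w] at hmv
  exact ⟨w.erase a₂ ++ [t], hmv, List.getLast?_concat⟩

end child

section counting
variable {α : Type*} [DecidableEq α]

lemma indexOf_concat_self {a : α} : ∀ (w : List α), a ∉ w →
    List.idxOf a (w ++ [a]) = w.length
  | [], _ => by simp
  | b :: t, h => by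
    have hba : b ≠ a := fun e => h (by simp [e])
    have ht : a ∉ t := fun e => h (by simp [e])
    rw [List.cons_append, List.idxOf_cons_ne _ hba, indexOf_concat_self t ht]
    rfl

lemma posIn_concat_of_mem {a : α} {w : List α} (s : List α) (h : a ∈ w) :
    posIn (w ++ s) a = posIn w a := by
  simp [posIn, List.idxOf_append_of_mem h]

lemma posIn_concat_self {a : α} {w : List α} (h : a ∉ w) :
    posIn (w ++ [a]) a = w.length + 1 := by
  simp [posIn, indexOf_concat_self w h]

lemma posIn_le_length {a : α} {w : List α} (h : a ∈ w) : posIn w a ≤ w.length := by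
  have := List.idxOf_lt_length_iff.mpr h
  simp [posIn]; omega

lemma key (m : ℕ) (hm : 2 ≤ m) :
    ∀ (A : Finset α) (D : Set (List α)), A.card = m → IsMaxArrowSP A D →
    ∀ a₁ a₂ : α, a₁ ≠ a₂ → TerminalElt D a₁ → TerminalElt D a₂ →
      (∀ a : α, TerminalElt D a → a = a₁ ∨ a = a₂) →
      D.ncard = 2 ^ (m - 1) ∧
      {l ∈ D | posIn l a₁ = 1}.ncard = 1 ∧
      ∀ j : ℕ, 2 ≤ j → j ≤ m → {l ∈ D | posIn l a₁ = j}.ncard = 2 ^ (j - 2) := by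
  induction m, hm using Nat.le_induction with
  | base =>
    intro A D hcard hD a₁ a₂ h12 ht1 ht2 hall
    obtain ⟨⟨⟨hlin, hnt⟩, hmax⟩, hsp⟩ := hD
    have ha₁ : a₁ ∈ A := terminal_mem_A hlin ht1
    have ha₂ : a₂ ∈ A := terminal_mem_A hlin ht2
    have hApair : A = {a₁, a₂} := by
      refine (Finset.eq_of_subset_of_card_le ?_ ?_).symm
      · intro u hu
        rcases Finset.mem_insert.mp hu with rfl | hu
        · exact ha₁
        · rw [Finset.mem_singleton.mp hu]; exact ha₂
      · rw [hcard, Finset.card_pair h12]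
    -- D equals the full set of linear orders
    have hF : IsCondorcetDomain A {l : List α | IsLinOrd A l} := by
      refine ⟨fun l hl => hl, ?_⟩
      rintro ⟨x, y, z, hxy, hxz, hyz, v₁, hv₁, v₂, hv₂, v₃, hv₃, e1, e2, e3⟩
      have hsub : ({x, y, z} : Finset α) ⊆ A := by
        intro u hu
        rcases Finset.mem_insert.mp hu with rfl | hu
        · exact (hv₁.2 u).mp (mem_of_restrict_eq e1 (by simp))
        rcases Finset.mem_insert.mp hu with rfl | hu
        · exact (hv₁.2 u).mp (mem_of_restrict_eq e1 (by simp))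
        · have := Finset.mem_singleton.mp hu; subst this
          exact (hv₁.2 u).mp (mem_of_restrict_eq e1 (by simp))
      have := Finset.card_le_card hsub
      rw [hcard, Finset.card_eq_three.mpr ⟨x, y, z, hxy, hxz, hyz, rfl⟩] at this
      omega
    have hDF : D = {l : List α | IsLinOrd A l} := (hmax _ hF (fun l hl => hlin l hl)).symm
    have hmem1 : [a₁, a₂] ∈ D := by
      rw [hDF]
      exact ⟨by simp [h12], fun u => by rw [hApair]; simp⟩
    have hmem2 : [a₂, a₁] ∈ D := by
      rw [hDF]
      exact ⟨by simp [h12.symm], fun u => by rw [hApair]; simp [or_comm]⟩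
    have hchar : ∀ l ∈ D, l = [a₁, a₂] ∨ l = [a₂, a₁] := by
      intro l hl
      have hllin := hlin l hl
      have hlen : l.length = 2 := by rw [hllin.length_eq, hcard]
      obtain ⟨p, q, rfl⟩ := List.length_eq_two.mp hlen
      have hpq : p ≠ q := by
        have := hllin.1; simp at this; exact this
      have hq1 : a₁ ∈ [p, q] := (hllin.2 a₁).mpr ha₁
      have hq2 : a₂ ∈ [p, q] := (hllin.2 a₂).mpr ha₂
      simp at hq1 hq2
      rcases hq1 with rfl | rfl
      · rcases hq2 with rfl | rfl
        · exact absurd rfl h12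
        · exact Or.inl rfl
      · rcases hq2 with rfl | rfl
        · exact Or.inr rfl
        · exact absurd rfl h12
    have hDset : D = {[a₁, a₂], [a₂, a₁]} := by
      ext l
      constructor
      · intro hl
        rcases hchar l hl with rfl | rfl
        · exact Set.mem_insert _ _
        · exact Set.mem_insert_of_mem _ rfl
      · rintro (rfl | rfl)
        · exact hmem1
        · exact hmem2
    have hne12 : ([a₁, a₂] : List α) ≠ [a₂, a₁] := by
      intro h; injection h with h1 _; exact h12 h1
    have p1 : posIn [a₁, a₂] a₁ = 1 := by simp [posIn]
    have p2 : posIn [a₂, a₁] a₁ = 2 := by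
      simp [posIn, List.idxOf_cons_ne _ h12.symm]
    refine ⟨?_, ?_, ?_⟩
    · rw [hDset]; exact Set.ncard_pair hne12
    · have : {l ∈ D | posIn l a₁ = 1} = {[a₁, a₂]} := by
        ext l
        simp only [Set.mem_setOf_eq, Set.mem_singleton_iff]
        constructor
        · rintro ⟨hl, hp⟩
          rcases hchar l hl with rfl | rfl
          · rfl
          · rw [p2] at hp; omega
        · rintro rfl
          exact ⟨hmem1, p1⟩
      rw [this, Set.ncard_singleton]
    · intro j hj2 hjm
      have hj : j = 2 := by omega
      subst hj
      have : {l ∈ D | posIn l a₁ = 2} = {[a₂, a₁]} := by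
        ext l
        simp only [Set.mem_setOf_eq, Set.mem_singleton_iff]
        constructor
        · rintro ⟨hl, hp⟩
          rcases hchar l hl with rfl | rfl
          · rw [p1] at hp; omega
          · rfl
        · rintro rfl
          exact ⟨hmem2, p2⟩
      rw [this, Set.ncard_singleton]
      rfl
  | succ m hm IH =>
    intro A D hcard hD a₁ a₂ h12 ht1 ht2 hall
    have hlin := hD.1.1.1
    have ha₁A : a₁ ∈ A := terminal_mem_A hlin ht1
    have ha₂A : a₂ ∈ A := terminal_mem_A hlin ht2
    have hfinD : D.Finite := finite_of_linOrd hlin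
    have hlen : ∀ l ∈ D, l.length = m + 1 := fun l hl => by
      rw [(hlin l hl).length_eq, hcard]
    have hendD : ∀ l ∈ D, l.getLast? = some a₁ ∨ l.getLast? = some a₂ := by
      intro l hl
      have hne : l ≠ [] := by
        intro h; have := hlen l hl; rw [h] at this; simp at this
      rcases hall (l.getLast hne) ⟨l, hl, List.getLast?_eq_getLast hne⟩ with h | h
      · left; rw [List.getLast?_eq_getLast hne, h]
      · right; rw [List.getLast?_eq_getLast hne, h]
    -- cardinality of any child domain
    have childcard : ∀ t : α, TerminalElt D t → (childDom D t).ncard = 2 ^ (m - 1) := by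
      intro t htt
      have hC := child_isMaxArrowSP hD htt
      have hcardE : (A.erase t).card = m := by
        rw [Finset.card_erase_of_mem (terminal_mem_A hlin htt), hcard]
        omega
      obtain ⟨t₁, t₂, hne, hT1, hT2, hallC⟩ :=
        exists_two_terminals_s5 hC (by rw [hcardE]; exact hm)
      exact (IH _ _ hcardE hC t₁ t₂ hne hT1 hT2 hallC).1
    -- the child domain at a₂ and its a₁-counts
    have hC₂ := child_isMaxArrowSP hD ht2
    have hcard₂ : (A.erase a₂).card = m := by
      rw [Finset.card_erase_of_mem ha₂A, hcard]
      omega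
    have hterm₁C₂ : TerminalElt (childDom D a₂) a₁ := child_terminal hD ht2 ht1 h12
    have hcounts : (childDom D a₂).ncard = 2 ^ (m - 1) ∧
        {w ∈ childDom D a₂ | posIn w a₁ = 1}.ncard = 1 ∧
        ∀ j : ℕ, 2 ≤ j → j ≤ m →
          {w ∈ childDom D a₂ | posIn w a₁ = j}.ncard = 2 ^ (j - 2) := by
      obtain ⟨t₁, t₂, hne, hT1, hT2, hallC⟩ :=
        exists_two_terminals_s5 hC₂ (by rw [hcard₂]; exact hm)
      rcases hallC a₁ hterm₁C₂ with rfl | rfl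
      · exact IH _ _ hcard₂ hC₂ a₁ t₂ hne hT1 hT2 hallC
      · exact IH _ _ hcard₂ hC₂ a₁ t₁ hne.symm hT2 hT1 (fun u hu => (hallC u hu).symm)
    have hlinC₂ := hC₂.1.1.1
    have ha₁C₂mem : ∀ w ∈ childDom D a₂, a₁ ∈ w := fun w hw =>
      ((hlinC₂ w hw).2 a₁).mpr (Finset.mem_erase.mpr ⟨h12, ha₁A⟩)
    have hwlen₂ : ∀ w ∈ childDom D a₂, w.length = m := fun w hw => by
      rw [(hlinC₂ w hw).length_eq, hcard₂]
    have ha₁notin : ∀ w : List α, w ++ [a₁] ∈ D → a₁ ∉ w := by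
      intro w hw hmem
      have := (hlin _ hw).1
      rw [List.nodup_append] at this
      exact this.2.2 a₁ hmem a₁ (by simp) rfl
    -- set identity for positions up to m
    have hsetj : ∀ j : ℕ, j ≤ m → {l ∈ D | posIn l a₁ = j} =
        (fun w => w ++ [a₂]) '' {w ∈ childDom D a₂ | posIn w a₁ = j} := by
      intro j hj
      ext l
      constructor
      · rintro ⟨hl, hp⟩
        rcases hendD l hl with h | h
        · obtain ⟨w, rfl⟩ : ∃ w, l = w ++ [a₁] := ⟨l.dropLast, eq_concat_of_getLast? h⟩
          rw [posIn_concat_self (ha₁notin w hl)] at hp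
          have hlw := hlen _ hl
          simp only [List.length_append, List.length_singleton] at hlw
          omega
        · obtain ⟨w, rfl⟩ : ∃ w, l = w ++ [a₂] := ⟨l.dropLast, eq_concat_of_getLast? h⟩
          have hwC : w ∈ childDom D a₂ := hl
          exact ⟨w, ⟨hwC, by rw [← hp, posIn_concat_of_mem _ (ha₁C₂mem w hwC)]⟩, rfl⟩
      · rintro ⟨w, ⟨hw, hp⟩, rfl⟩
        exact ⟨hw, by rw [posIn_concat_of_mem _ (ha₁C₂mem w hw), hp]⟩
    -- position m+1 means ending with a₁
    have hS1 : {l ∈ D | posIn l a₁ = m + 1} = (fun w => w ++ [a₁]) '' (childDom D a₁) := by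
      ext l
      constructor
      · rintro ⟨hl, hp⟩
        rcases hendD l hl with h | h
        · obtain ⟨w, rfl⟩ : ∃ w, l = w ++ [a₁] := ⟨l.dropLast, eq_concat_of_getLast? h⟩
          exact ⟨w, hl, rfl⟩
        · obtain ⟨w, rfl⟩ : ∃ w, l = w ++ [a₂] := ⟨l.dropLast, eq_concat_of_getLast? h⟩
          have hwC : w ∈ childDom D a₂ := hl
          rw [posIn_concat_of_mem _ (ha₁C₂mem w hwC)] at hp
          have h1 := posIn_le_length (ha₁C₂mem w hwC)
          have h2 := hwlen₂ w hwC
          omega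
      · rintro ⟨w, hw, rfl⟩
        refine ⟨hw, ?_⟩
        rw [posIn_concat_self (ha₁notin w hw)]
        have hlw := hlen _ hw
        simp only [List.length_append, List.length_singleton] at hlw
        omega
    -- splitting D
    have hsplit : D = (fun w => w ++ [a₁]) '' (childDom D a₁) ∪
        (fun w => w ++ [a₂]) '' (childDom D a₂) := by
      ext l
      constructor
      · intro hl
        rcases hendD l hl with h | h
        · obtain ⟨w, rfl⟩ : ∃ w, l = w ++ [a₁] := ⟨l.dropLast, eq_concat_of_getLast? h⟩
          exact Or.inl ⟨w, hl, rfl⟩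
        · obtain ⟨w, rfl⟩ : ∃ w, l = w ++ [a₂] := ⟨l.dropLast, eq_concat_of_getLast? h⟩
          exact Or.inr ⟨w, hl, rfl⟩
      · rintro (⟨w, hw, rfl⟩ | ⟨w, hw, rfl⟩) <;> exact hw
    have hdisj : Disjoint ((fun w => w ++ [a₁]) '' (childDom D a₁))
        ((fun w => w ++ [a₂]) '' (childDom D a₂)) := by
      rw [Set.disjoint_left]
      rintro l ⟨w, hw, rfl⟩ ⟨v, hv, heq⟩
      have := congrArg List.getLast? heq
      rw [List.getLast?_concat, List.getLast?_concat] at this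
      injection this with h'
      exact h12 h'.symm
    have hfin₁ : ((fun w => w ++ [a₁]) '' (childDom D a₁)).Finite :=
      hfinD.subset (by rintro l ⟨w, hw, rfl⟩; exact hw)
    have hfin₂ : ((fun w => w ++ [a₂]) '' (childDom D a₂)).Finite :=
      hfinD.subset (by rintro l ⟨w, hw, rfl⟩; exact hw)
    have hinj₁ := concat_injective (α := α) a₁
    have hinj₂ := concat_injective (α := α) a₂
    have hDcard : D.ncard = 2 ^ m := by
      rw [hsplit, Set.ncard_union_eq hdisj hfin₁ hfin₂,
        Set.ncard_image_of_injective _ hinj₁, Set.ncard_image_of_injective _ hinj₂,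
        childcard a₁ ht1, hcounts.1, ← two_mul, ← pow_succ',
        show m - 1 + 1 = m by omega]
    refine ⟨by simpa using hDcard, ?_, ?_⟩
    · rw [hsetj 1 (by omega), Set.ncard_image_of_injective _ hinj₂]
      exact hcounts.2.1
    · intro j hj2 hjm
      by_cases hjle : j ≤ m
      · rw [hsetj j hjle, Set.ncard_image_of_injective _ hinj₂]
        exact hcounts.2.2 j hj2 hjle
      · have hj : j = m + 1 := by omega
        subst hj
        rw [hS1, Set.ncard_image_of_injective _ hinj₁, childcard a₁ ht1]
        congr 1

end counting


/-- In a maximal Arrow's single-peaked domain on a set of size `m ≥ 3` with terminal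
elements `a₁, a₂`, exactly `2^(j-2)` orders have `aᵢ` in position `j` (for `2 ≤ j ≤ m`)
and exactly one order has `aᵢ` in position 1. -/
theorem stmt_5 {α : Type*} [DecidableEq α] (A : Finset α) (m : ℕ) (hm : A.card = m)
    (hm3 : 3 ≤ m) (D : Set (List α)) (hD : IsMaxArrowSP A D) (a₁ a₂ : α) (h12 : a₁ ≠ a₂)
    (ht1 : TerminalElt D a₁) (ht2 : TerminalElt D a₂)
    (hall : ∀ a : α, TerminalElt D a → a = a₁ ∨ a = a₂) :
    ∀ i ∈ ({a₁, a₂} : Set α),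
      (∀ j : ℕ, 2 ≤ j → j ≤ m → {l ∈ D | posIn l i = j}.ncard = 2 ^ (j - 2)) ∧
      {l ∈ D | posIn l i = 1}.ncard = 1 := by
  have hm2 : 2 ≤ m := by omega
  intro i hi
  rcases hi with rfl | hi
  · obtain ⟨-, h1, hj⟩ := key m hm2 A D hm hD i a₂ h12 ht1 ht2 hall
    exact ⟨hj, h1⟩
  · rw [Set.mem_singleton_iff] at hi
    subst hi
    obtain ⟨-, h1, hj⟩ := key m hm2 A D hm hD i a₁ h12.symm ht2 ht1
      (fun a ha => (hall a ha).symm)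
    exact ⟨hj, h1⟩
end

section
/- Let D be a maximal Arrow's single-peaked domain on a set A of size m, let f be a terminal element of D, and let W ∈ D be an order with f in position i. For any k with i ≤ k ≤ m, the order W_k obtained from W by moving f to position k (leaving the relative order of all other elements unchanged) belongs to D. -/
namespace ShuffleAux

theorem eraseIdx_idxOf_eq_erase {α : Type*} [DecidableEq α] (a : α) (l : List α) :
    l.eraseIdx (l.idxOf a) = l.erase a := by
  induction l with
  | nil => simp
  | cons x xs ih =>
    by_cases h : x = a
    · subst h; simp [List.idxOf_cons]
    · simp [List.idxOf_cons, h, ih, List.erase_cons]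

theorem insertIdx_eq_take_cons_drop {α : Type*} (x : α) :
    ∀ (n : ℕ) (l : List α), n ≤ l.length →
      l.insertIdx n x = l.take n ++ x :: l.drop n
  | 0, l, _ => by simp [List.insertIdx_zero]
  | n + 1, [], h => by simp at h
  | n + 1, a :: l, h => by
    simp only [List.insertIdx_succ_cons, List.take_succ_cons, List.drop_succ_cons,
      List.cons_append]
    rw [insertIdx_eq_take_cons_drop x n l (by simpa using h)]

theorem filter_insertIdx_neg {α : Type*} (p : α → Bool) (x : α) (n : ℕ) (l : List α)
    (hn : n ≤ l.length) (hx : p x = false) :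
    (l.insertIdx n x).filter p = l.filter p := by
  rw [insertIdx_eq_take_cons_drop x n l hn, List.filter_append, List.filter_cons_of_neg (by simp [hx]),
    ← List.filter_append, List.take_append_drop]

theorem filter_erase_neg {α : Type*} [DecidableEq α] (p : α → Bool) (x : α) (l : List α)
    (hx : p x = false) : (l.erase x).filter p = l.filter p := by
  by_cases hm : x ∈ l
  · have hj : l.idxOf x < l.length := List.idxOf_lt_length_iff.2 hm
    rw [← ShuffleAux.eraseIdx_idxOf_eq_erase, List.eraseIdx_eq_take_drop_succ,
      List.filter_append]
    conv_rhs => rw [← List.take_append_drop (l.idxOf x) l,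
      List.drop_eq_getElem_cons hj, List.getElem_idxOf hj]
    rw [List.filter_append, List.filter_cons_of_neg (by simp [hx])]
  · rw [List.erase_of_not_mem hm]

theorem getLast?_filter_last {α : Type*} (p : α → Bool) (x : α) (l : List α)
    (hl : l.getLast? = some x) (hx : p x = true) :
    (l.filter p).getLast? = some x := by
  obtain ⟨ys, rfl⟩ := List.getLast?_eq_some_iff.1 hl
  rw [List.filter_append]
  have : List.filter p [x] = [x] := by simp [hx]
  rw [this, List.getLast?_append_of_ne_nil _ (by simp)]
  simp

theorem key_lemma {α : Type*} (p : α → Bool) (f : α) (j n : ℕ) (L : List α)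
    (hf : p f = true) (hjn : j ≤ n) (hn : n ≤ L.length) :
    ((L.insertIdx n f).filter p).getLast? = some f ∨
    ((L.insertIdx n f).filter p).getLast? = ((L.insertIdx j f).filter p).getLast? := by
  have hj : j ≤ L.length := le_trans hjn hn
  rw [insertIdx_eq_take_cons_drop f n L hn, insertIdx_eq_take_cons_drop f j L hj,
    List.filter_append, List.filter_append, List.filter_cons_of_pos hf,
    List.filter_cons_of_pos hf]
  rcases eq_or_ne ((L.drop n).filter p) [] with h | h
  · left
    rw [h]
    simp
  · right
    have hdecomp : L.drop j = (L.drop j).take (n - j) ++ L.drop n := by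
      conv_lhs => rw [← List.take_append_drop (n - j) (L.drop j)]
      rw [List.drop_drop]
      congr 2
      omega
    rw [hdecomp, List.filter_append]
    rw [show (L.take n).filter p ++ f :: (L.drop n).filter p
        = ((L.take n).filter p ++ [f]) ++ (L.drop n).filter p by simp]
    rw [show (L.take j).filter p ++ f :: (((L.drop j).take (n - j)).filter p ++ (L.drop n).filter p)
        = ((L.take j).filter p ++ f :: ((L.drop j).take (n - j)).filter p) ++ (L.drop n).filter p by simp]
    rw [List.getLast?_append_of_ne_nil _ h, List.getLast?_append_of_ne_nil _ h]

theorem insertIdx_idxOf_erase {α : Type*} [DecidableEq α] (f : α) (l : List α)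
    (hm : f ∈ l) : (l.erase f).insertIdx (l.idxOf f) f = l := by
  have hj : l.idxOf f < l.length := List.idxOf_lt_length_iff.2 hm
  rw [← ShuffleAux.eraseIdx_idxOf_eq_erase, List.eraseIdx_eq_take_drop_succ]
  have hlen : (l.take (l.idxOf f)).length = l.idxOf f := by
    rw [List.length_take]; omega
  rw [insertIdx_eq_take_cons_drop f _ _ (by rw [List.length_append, hlen]; omega)]
  rw [List.take_append_of_le_length (by omega), List.take_take, min_self,
    show List.drop (l.idxOf f) (l.take (l.idxOf f) ++ l.drop (l.idxOf f + 1))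
      = l.drop (l.idxOf f + 1) from by
        rw [List.drop_append, hlen]
        simp]
  conv_rhs => rw [← List.take_append_drop (l.idxOf f) l, List.drop_eq_getElem_cons hj,
    List.getElem_idxOf hj]

end ShuffleAux


/-- Shuffle lemma: if `f` is a terminal element of a maximal Arrow's single-peaked
domain `D` and `W ∈ D` has `f` in position `i`, then for any `i ≤ k ≤ m` the order
obtained from `W` by moving `f` to position `k` is also in `D`. -/
theorem stmt_8 {α : Type*} [DecidableEq α] (A : Finset α) (m : ℕ) (hm : A.card = m)
    (D : Set (List α)) (hD : IsMaxArrowSP A D) (f : α) (hf : TerminalElt D f)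
    (W : List α) (hW : W ∈ D) (i k : ℕ) (hi : posIn W f = i) (hik : i ≤ k)
    (hkm : k ≤ m) :
    (W.erase f).insertIdx (k - 1) f ∈ D := by
  obtain ⟨⟨⟨hDlin, hDnoCT⟩, hDmax⟩, _, hNBall⟩ := hD
  obtain ⟨V, hV, hVf⟩ := hf
  -- f is a member of W
  have hfV : f ∈ V := by
    obtain ⟨ys, rfl⟩ := List.getLast?_eq_some_iff.1 hVf
    simp
  have hfA : f ∈ A := ((hDlin V hV).2 f).1 hfV
  have hfW : f ∈ W := ((hDlin W hW).2 f).2 hfA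
  have hWnd : W.Nodup := (hDlin W hW).1
  -- length of W is m
  have hlenW : W.length = m := by
    have h1 : W.toFinset = A := by
      ext a; rw [List.mem_toFinset]; exact (hDlin W hW).2 a
    rw [← hm, ← h1, List.toFinset_card_of_nodup hWnd]
  set j := W.idxOf f with hjdef
  have hj : j < W.length := List.idxOf_lt_length_iff.2 hfW
  have hji : j + 1 = i := by simpa [posIn] using hi
  have hjk : j ≤ k - 1 := by omega
  have hk1 : k - 1 ≤ (W.erase f).length := by
    rw [List.length_erase_of_mem hfW]; omega
  set Wk := (W.erase f).insertIdx (k - 1) f with hWkdef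
  have hWrec : (W.erase f).insertIdx j f = W := ShuffleAux.insertIdx_idxOf_erase f W hfW
  have hperm : Wk.Perm W := by
    refine (List.perm_insertIdx f (W.erase f) hk1).trans ?_
    exact (List.perm_cons_erase hfW).symm
  have hWkLin : IsLinOrd A Wk :=
    ⟨hperm.nodup_iff.2 hWnd, fun a => (hperm.mem_iff).trans ((hDlin W hW).2 a)⟩
  -- the enlarged domain
  set D' : Set (List α) := insert Wk D with hD'def
  have hlin' : ∀ l ∈ D', IsLinOrd A l := by
    intro l hl
    rcases Set.mem_insert_iff.1 hl with rfl | hl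
    · exact hWkLin
    · exact hDlin l hl
  have hnoCT' : ¬ CondorcetTriple D' := by
    rintro ⟨a, b, c, hab, hac, hbc, v₁, hv₁, v₂, hv₂, v₃, hv₃, r₁, r₂, r₃⟩
    set T : Finset α := {a, b, c} with hTdef
    -- a, b, c ∈ A
    have hmemA : ∀ y ∈ T, y ∈ A := by
      intro y hy
      have hy1 : y ∈ restrictList v₁ T := by
        rw [r₁]
        simp only [hTdef, Finset.mem_insert, Finset.mem_singleton] at hy
        rcases hy with rfl | rfl | rfl <;> simp
      have : y ∈ v₁ := (List.filter_sublist (l := v₁)).mem hy1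
      exact ((hlin' v₁ hv₁).2 y).1 this
    have hTA : T ⊆ A := fun y hy => hmemA y hy
    have hT3 : T.card = 3 := by
      rw [Finset.card_eq_three]; exact ⟨a, b, c, hab, hac, hbc, rfl⟩
    obtain ⟨x, hxT, hxNB⟩ := hNBall T hTA hT3
    have key : ∀ v ∈ D', (restrictList v T).getLast? ≠ some x := by
      intro v hv
      rcases Set.mem_insert_iff.1 hv with rfl | hvD
      · by_cases hfT : f ∈ T
        · have hVr : (restrictList V T).getLast? = some f :=
            ShuffleAux.getLast?_filter_last _ f V hVf (by simpa using hfT)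
          have hxf : x ≠ f := by
            intro h
            exact hxNB V hV (h ▸ hVr)
          rcases ShuffleAux.key_lemma (fun y => decide (y ∈ T)) f j (k - 1) (W.erase f)
              (by simpa using hfT) hjk hk1 with h | h
          · show (Wk.filter (fun y => decide (y ∈ T))).getLast? ≠ some x
            rw [h]
            intro hcon
            exact hxf (Option.some_injective _ hcon).symm
          · show (Wk.filter (fun y => decide (y ∈ T))).getLast? ≠ some x
            rw [h, hWrec]
            exact hxNB W hW
        · have heq : restrictList Wk T = restrictList W T := by
            show Wk.filter (fun y => decide (y ∈ T)) = W.filter (fun y => decide (y ∈ T))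
            rw [hWkdef, ShuffleAux.filter_insertIdx_neg _ f _ _ hk1 (by simpa using hfT),
              ShuffleAux.filter_erase_neg _ f _ (by simpa using hfT)]
          rw [heq]
          exact hxNB W hW
      · exact hxNB v hvD
    have hxabc : x = a ∨ x = b ∨ x = c := by
      simpa [hTdef] using hxT
    rcases hxabc with rfl | rfl | rfl
    · exact key v₂ hv₂ (by rw [r₂]; simp)
    · exact key v₃ hv₃ (by rw [r₃]; simp)
    · exact key v₁ hv₁ (by rw [r₁]; simp)
  have hDeq : D' = D := hDmax D' ⟨hlin', hnoCT'⟩ (Set.subset_insert _ _)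
  have : Wk ∈ D' := Set.mem_insert _ _
  rwa [hDeq] at this
end

section
/- Let D be a maximal Arrow's single-peaked domain on a set A of size m ≥ 4. If P = (s,a₁,a₂,…,a_{m−2},f) is an extremal order of D, then the order P' = (a₂,a₁,a₃,…,a_{m−2},f,s) also belongs to D. -/
lemma aux_getLast?_filter {α : Type*} {l : List α} {p : α → Bool} {a : α}
    (h : l.getLast? = some a) (hp : p a = true) :
    (l.filter p).getLast? = some a := by
  induction l using List.reverseRecOn with
  | nil => simp at h
  | append_singleton l' b ih =>
    rw [List.getLast?_concat] at h
    have hb : b = a := by injection h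
    subst hb
    rw [List.filter_append, show List.filter p [b] = [b] from by simp [hp],
      List.getLast?_concat]

lemma aux_getLast?_append_of_ne_nil {α : Type*} (l₁ l₂ : List α) (h : l₂ ≠ []) :
    (l₁ ++ l₂).getLast? = l₂.getLast? := by
  rw [List.getLast?_append]
  obtain ⟨y, hy⟩ := Option.isSome_iff_exists.mp (List.getLast?_isSome.mpr h)
  rw [hy]; rfl

/-- If `P = (s, a₁, a₂, a₃, …, a_{m-2}, f)` is an extremal order of a maximal Arrow's
single-peaked domain `D` on a set of size `m ≥ 4`, then
`P' = (a₂, a₁, a₃, …, a_{m-2}, f, s)` also belongs to `D`. -/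
theorem stmt_9 {α : Type*} [DecidableEq α] (A : Finset α) (hm : 4 ≤ A.card)
    (D : Set (List α)) (hD : IsMaxArrowSP A D) (s f a₁ a₂ : α) (L : List α)
    (hP : IsExtremal D (s :: a₁ :: a₂ :: (L ++ [f]))) :
    a₂ :: a₁ :: (L ++ [f, s]) ∈ D := by
  classical
  obtain ⟨hPD, s', t', hst, hhead, hlast, hTs, hTt, hterm⟩ := hP
  have hss : s = s' := by simpa using hhead
  subst hss
  set M : List α := L ++ [f] with hM
  set P : List α := s :: a₁ :: a₂ :: M with hPdef
  set P' : List α := a₂ :: a₁ :: (L ++ [f, s]) with hP'def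
  have hP'alt : P' = (a₂ :: a₁ :: M) ++ [s] := by rw [hP'def, hM]; simp
  have hCDom := hD.1.1
  have hlinP : IsLinOrd A P := hCDom.1 _ hPD
  have hperm : P'.Perm P := by
    rw [hP'alt, hPdef]
    exact (List.perm_append_singleton s (a₂ :: a₁ :: M)).trans
      ((List.Perm.swap a₁ a₂ M).cons s)
  have hlinP' : IsLinOrd A P' :=
    ⟨hperm.nodup_iff.mpr hlinP.1, fun a => (hperm.mem_iff).trans (hlinP.2 a)⟩
  -- key: the never-bottom elements of D survive adding P'
  have key : ∀ (T : Finset α), T ⊆ A → T.card = 3 → ∀ x, NeverBottom D T x →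
      (restrictList P' T).getLast? ≠ some x := by
    intro T hTA hT3 x hx
    obtain ⟨hxT, hnb⟩ := hx
    by_cases hsT : s ∈ T
    · have h1 : P'.getLast? = some s := by rw [hP'alt]; exact List.getLast?_concat
      have hlastP' : (restrictList P' T).getLast? = some s :=
        aux_getLast?_filter h1 (by simpa using hsT)
      have hxs : x ≠ s := by
        obtain ⟨v, hvD, hvlast⟩ := hTs
        have h2 : (restrictList v T).getLast? = some s :=
          aux_getLast?_filter hvlast (by simpa using hsT)
        intro hxe; subst hxe; exact hnb v hvD h2
      rw [hlastP']
      intro h; exact hxs (Option.some_injective _ h).symm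
    · have hTne : ¬ T ⊆ ({a₁, a₂} : Finset α) := by
        intro hsub
        have h1 := Finset.card_le_card hsub
        have h2 : ({a₁, a₂} : Finset α).card ≤ 2 :=
          (Finset.card_insert_le _ _).trans (by simp)
        omega
      obtain ⟨t, htT, htn⟩ := Finset.not_subset.mp hTne
      simp only [Finset.mem_insert, Finset.mem_singleton, not_or] at htn
      have htP : t ∈ P := (hlinP.2 t).mpr (hTA htT)
      have htM : t ∈ M := by
        rw [hPdef] at htP
        simp only [List.mem_cons] at htP
        rcases htP with rfl | rfl | rfl | h
        · exact absurd htT hsT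
        · exact absurd rfl htn.1
        · exact absurd rfl htn.2
        · exact h
      have hfM : (M.filter (fun a => a ∈ T) : List α) ≠ [] :=
        List.ne_nil_of_mem (List.mem_filter.mpr ⟨htM, by simpa using htT⟩)
      have e1 : (restrictList P' T).getLast? = (M.filter (fun a => a ∈ T)).getLast? := by
        simp only [restrictList, hP'alt]
        rw [show (a₂ :: a₁ :: M) ++ [s] = [a₂, a₁] ++ (M ++ [s]) from by simp]
        rw [List.filter_append, List.filter_append,
          show List.filter (fun a => a ∈ T) [s] = [] from by simp [hsT],
          List.append_nil]
        exact aux_getLast?_append_of_ne_nil _ _ hfM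
      have e2 : (restrictList P T).getLast? = (M.filter (fun a => a ∈ T)).getLast? := by
        simp only [restrictList, hPdef]
        rw [show (s :: a₁ :: a₂ :: M) = [s, a₁, a₂] ++ M from rfl, List.filter_append]
        exact aux_getLast?_append_of_ne_nil _ _ hfM
      rw [e1, ← e2]
      exact hnb P hPD
  -- D ∪ {P'} is a Condorcet domain
  set D' : Set (List α) := insert P' D with hD'def
  have hlin' : ∀ l ∈ D', IsLinOrd A l := by
    intro l hl
    rcases Set.mem_insert_iff.mp hl with rfl | hl
    · exact hlinP'
    · exact hCDom.1 l hl
  have hbotD' : ∀ T : Finset α, T ⊆ A → T.card = 3 →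
      ∃ x, x ∈ T ∧ ∀ l ∈ D', (restrictList l T).getLast? ≠ some x := by
    intro T hTA hT3
    obtain ⟨x, hx⟩ := hD.2.2 T hTA hT3
    refine ⟨x, hx.1, fun l hl => ?_⟩
    rcases Set.mem_insert_iff.mp hl with rfl | hl
    · exact key T hTA hT3 x hx
    · exact hx.2 l hl
  have hCD' : IsCondorcetDomain A D' := by
    refine ⟨hlin', ?_⟩
    rintro ⟨a, b, c, hab, hac, hbc, v₁, hv₁, v₂, hv₂, v₃, hv₃, h₁, h₂, h₃⟩
    have hT3 : ({a, b, c} : Finset α).card = 3 :=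
      Finset.card_eq_three.mpr ⟨a, b, c, hab, hac, hbc, rfl⟩
    have hmemA : ∀ y, y ∈ ([a, b, c] : List α) → y ∈ A := by
      intro y hy
      rw [← h₁] at hy
      exact ((hlin' v₁ hv₁).2 y).mp (List.mem_filter.mp hy).1
    have hTA : ({a, b, c} : Finset α) ⊆ A := by
      intro y hy
      simp only [Finset.mem_insert, Finset.mem_singleton] at hy
      rcases hy with rfl | rfl | rfl
      · exact hmemA y (by simp)
      · exact hmemA y (by simp)
      · exact hmemA y (by simp)
    obtain ⟨x, hxT, hxnb⟩ := hbotD' _ hTA hT3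
    have hx1 := hxnb v₁ hv₁
    have hx2 := hxnb v₂ hv₂
    have hx3 := hxnb v₃ hv₃
    rw [h₁] at hx1; rw [h₂] at hx2; rw [h₃] at hx3
    simp only [Finset.mem_insert, Finset.mem_singleton] at hxT
    rcases hxT with rfl | rfl | rfl
    · exact hx2 (by simp)
    · exact hx3 (by simp)
    · exact hx1 (by simp)
  have hEq := hD.1.2 D' hCD' (Set.subset_insert _ _)
  rw [← hEq]
  exact Set.mem_insert _ _
end
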